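/- arXiv:2410.02151 — 5 statements merged into one kernel-verified Lean document; each statement's English description precedes it below -/
import Mathlib

section
/- (Lemma on the truncated map Φ_N, self-mapping part.) Let d ≥ 1, let D ⊆ ℝ^d be a bounded measurable set with positive finite Lebesgue measure, and let T > 0, C_L > 0, R > 0, M' > 0. Let F : ℝ → ℝ satisfy |F(z)| ≤ C_F |z|^p for all z ∈ ℝ, with p > 1 and C_F > 0. Let G_N : (0,T)×D×D → ℝ be measurable with ess sup_{(t,x)∈(0,T)×D} ∫₀ᵗ ∫_D |G_N(t−τ,x,y)| dy dτ ≤ 2 C_L T and ess sup_{(t,x)∈(0,T)×D} ∫_D |G_N(t,x,y)| dy ≤ 2 C_L. Assume 2 C_L R + 2 C_L T C_F (M')^p ≤ M'. Then for every u₀ ∈ L^∞(D) with ‖u₀‖_{L^∞} ≤ R and every measurable u : (0,T)×D → ℝ with ess sup_{(t,x)} |u(t,x)| ≤ M', the function Φ_{N,u₀}[u](t,x) := ∫_D G_N(t,x,y) u₀(y) dy + ∫₀ᵗ ∫_D G_N(t−τ,x,y) F(u(τ,y)) dy dτ satisfies ess sup_{(t,x)∈(0,T)×D} |Φ_{N,u₀}[u](t,x)|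 ≤ M'. -/
open MeasureTheory ENNReal Set Filter

noncomputable section

/-- Euclidean space `ℝ^d`. -/
abbrev Esp (d : ℕ) := EuclideanSpace ℝ (Fin d)

/-- `L^q` seminorm (with exponent `q ∈ [1,∞]` as an `ℝ≥0∞`) of an `ℝ≥0∞`-valued function. -/
def eLp {α : Type*} [MeasurableSpace α] (μ : Measure α) (q : ℝ≥0∞) (f : α → ℝ≥0∞) : ℝ≥0∞ :=
  if q = ⊤ then essSup f μ else (∫⁻ a, f a ^ q.toReal ∂μ) ^ (1 / q.toReal)

/-- The `L^q(D)` norm of `f : ℝ^d → ℝ`. -/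
def lqNorm {d : ℕ} (D : Set (Esp d)) (q : ℝ≥0∞) (f : Esp d → ℝ) : ℝ≥0∞ :=
  eLp (volume.restrict D) q fun x => (‖f x‖₊ : ℝ≥0∞)

/-- The mixed `L^r(0,T;L^s(D))` norm of `u : (0,T) × D → ℝ`. -/
def mixedNorm {d : ℕ} (D : Set (Esp d)) (T : ℝ) (r s : ℝ≥0∞) (u : ℝ → Esp d → ℝ) : ℝ≥0∞ :=
  eLp (volume.restrict (Ioo (0 : ℝ) T)) r fun t => lqNorm D s (u t)

/-- `1/r` as a real number, with the convention `1/∞ = 0`. -/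
def invE (r : ℝ≥0∞) : ℝ := (1 / r).toReal

/-- The Duhamel map `Φ_{u₀}` associated with kernel `G`, nonlinearity `F` and data `u₀`. -/
def duhamel {d : ℕ} (D : Set (Esp d)) (G : ℝ → Esp d → Esp d → ℝ) (F : ℝ → ℝ)
    (u₀ : Esp d → ℝ) (u : ℝ → Esp d → ℝ) : ℝ → Esp d → ℝ := fun t x =>
  (∫ y in D, G t x y * u₀ y) + ∫ τ in Ioo (0 : ℝ) t, ∫ y in D, G (t - τ) x y * F (u τ y)

/-- The restricted product measure on `(0,T) × D`. -/
def prodTD {d : ℕ} (D : Set (Esp d)) (T : ℝ) : Measure (ℝ × Esp d) :=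
  (volume.restrict (Ioo (0 : ℝ) T)).prod (volume.restrict D)

/-- The `L^∞((0,T) × D)` norm (essential supremum over the product measure). -/
def essSupNorm {d : ℕ} (D : Set (Esp d)) (T : ℝ) (u : ℝ → Esp d → ℝ) : ℝ≥0∞ :=
  essSup (fun q : ℝ × Esp d => (‖u q.1 q.2‖₊ : ℝ≥0∞)) (prodTD D T)

/-- Assumption 1: smoothing estimate for the kernel `G`. -/
def SmoothingEstimate {d : ℕ} (D : Set (Esp d)) (G : ℝ → Esp d → Esp d → ℝ)
    (C_L ν : ℝ) : Prop :=
  ∀ q₁ q₂ : ℝ≥0∞, 1 ≤ q₁ → q₁ ≤ q₂ → ∀ t ∈ Ioc (0 : ℝ) 1, ∀ g : Esp d → ℝ, Measurable g →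
    lqNorm D q₂ (fun x => ∫ y in D, G t x y * g y) ≤
      ENNReal.ofReal (C_L * t ^ (-(ν * (invE q₁ - invE q₂)))) * lqNorm D q₁ g

/-- Assumption 2 on the nonlinearity `F`. -/
def NonlinearityAssumption (F : ℝ → ℝ) (C_F p : ℝ) : Prop :=
  ContDiff ℝ 1 F ∧ F 0 = 0 ∧
    ∀ z₁ z₂ : ℝ, |F z₁ - F z₂| ≤ C_F * (max |z₁| |z₂|) ^ (p - 1) * |z₁ - z₂|

/-- Iterated mixed norm `‖‖K(t−τ,x,y)‖_{L^{r'}_τ(0,t;L^{s'}_y)}‖_{L^r_t(0,T;L^s_x)}`. -/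
def kernelNorm₁ {d : ℕ} (D : Set (Esp d)) (T : ℝ) (r s r' s' : ℝ≥0∞)
    (K : ℝ → Esp d → Esp d → ℝ) : ℝ≥0∞ :=
  eLp (volume.restrict (Ioo (0 : ℝ) T)) r fun t =>
    eLp (volume.restrict D) s fun x =>
      eLp (volume.restrict (Ioo (0 : ℝ) t)) r' fun τ =>
        eLp (volume.restrict D) s' fun y => (‖K (t - τ) x y‖₊ : ℝ≥0∞)

/-- Iterated mixed norm `‖‖K(t,x,·)‖_{L^{s'}_y(D)}‖_{L^r_t(0,T;L^s_x)}`. -/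
def kernelNorm₂ {d : ℕ} (D : Set (Esp d)) (T : ℝ) (r s s' : ℝ≥0∞)
    (K : ℝ → Esp d → Esp d → ℝ) : ℝ≥0∞ :=
  eLp (volume.restrict (Ioo (0 : ℝ) T)) r fun t =>
    eLp (volume.restrict D) s fun x =>
      eLp (volume.restrict D) s' fun y => (‖K t x y‖₊ : ℝ≥0∞)

/-- the truncated map `Φ_N` maps the ball `B_{L^∞(0,T;L^∞)}(M')` into itself. -/
theorem truncated_map_self_mapping
    {d : ℕ} (hd : 1 ≤ d) (D : Set (Esp d)) (hDmeas : MeasurableSet D)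
    (hDbdd : Bornology.IsBounded D) (hDpos : 0 < volume D) (hDfin : volume D ≠ ⊤)
    (T C_L R M' C_F p : ℝ) (hT : 0 < T) (hCL : 0 < C_L) (hR : 0 < R) (hM' : 0 < M')
    (hCF : 0 < C_F) (hp : 1 < p)
    (F : ℝ → ℝ) (hF : ∀ z : ℝ, |F z| ≤ C_F * |z| ^ p)
    (G_N : ℝ → Esp d → Esp d → ℝ)
    (hG1 : essSup
        (fun q : ℝ × Esp d =>
          ∫⁻ τ in Ioo (0 : ℝ) q.1, ∫⁻ y in D, (‖G_N (q.1 - τ) q.2 y‖₊ : ℝ≥0∞))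
        (prodTD D T) ≤ ENNReal.ofReal (2 * C_L * T))
    (hG2 : essSup (fun q : ℝ × Esp d => ∫⁻ y in D, (‖G_N q.1 q.2 y‖₊ : ℝ≥0∞)) (prodTD D T) ≤
      ENNReal.ofReal (2 * C_L))
    (hsmall : 2 * C_L * R + 2 * C_L * T * C_F * M' ^ p ≤ M') :
    ∀ u₀ : Esp d → ℝ, Measurable u₀ → lqNorm D ⊤ u₀ ≤ ENNReal.ofReal R →
      ∀ u : ℝ → Esp d → ℝ, Measurable (Function.uncurry u) →
        essSupNorm D T u ≤ ENNReal.ofReal M' →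
        essSupNorm D T (duhamel D G_N F u₀ u) ≤ ENNReal.ofReal M' :=  by
  intro u₀ hu₀m hu₀ u hum hu
  -- almost everywhere bounds
  have hM'0 : (0:ℝ) ≤ M' := hM'.le
  have hu_ae' : ∀ᵐ q ∂(prodTD D T), (‖u q.1 q.2‖₊ : ℝ≥0∞) ≤ ENNReal.ofReal M' :=
    (ENNReal.ae_le_essSup _).mono fun q hq => hq.trans hu
  have hu_ae : ∀ᵐ τ ∂(volume.restrict (Ioo (0:ℝ) T)), ∀ᵐ y ∂(volume.restrict D),
      (‖u τ y‖₊ : ℝ≥0∞) ≤ ENNReal.ofReal M' := by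
    have := Measure.ae_ae_of_ae_prod (μ := volume.restrict (Ioo (0:ℝ) T))
      (ν := volume.restrict D) hu_ae'
    exact this
  have hu₀_ae : ∀ᵐ y ∂(volume.restrict D), (‖u₀ y‖₊ : ℝ≥0∞) ≤ ENNReal.ofReal R := by
    have h : essSup (fun x => (‖u₀ x‖₊ : ℝ≥0∞)) (volume.restrict D) ≤ ENNReal.ofReal R := by
      simpa [lqNorm, eLp] using hu₀
    exact (ENNReal.ae_le_essSup _).mono fun y hy => hy.trans h
  have hG1_ae : ∀ᵐ q ∂(prodTD D T),
      (∫⁻ τ in Ioo (0:ℝ) q.1, ∫⁻ y in D, (‖G_N (q.1 - τ) q.2 y‖₊ : ℝ≥0∞)) ≤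
        ENNReal.ofReal (2 * C_L * T) :=
    (ENNReal.ae_le_essSup _).mono fun q hq => hq.trans hG1
  have hG2_ae : ∀ᵐ q ∂(prodTD D T),
      (∫⁻ y in D, (‖G_N q.1 q.2 y‖₊ : ℝ≥0∞)) ≤ ENNReal.ofReal (2 * C_L) :=
    (ENNReal.ae_le_essSup _).mono fun q hq => hq.trans hG2
  have ht_ae : ∀ᵐ q : ℝ × Esp d ∂(prodTD D T), q.1 ∈ Ioo (0:ℝ) T := by
    rw [prodTD]
    have hbad : ((volume.restrict (Ioo (0:ℝ) T)).prod (volume.restrict D))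
        ((Ioo (0:ℝ) T)ᶜ ×ˢ (univ : Set (Esp d))) = 0 := by
      rw [Measure.prod_prod, Measure.restrict_apply measurableSet_Ioo.compl]
      simp
    refine measure_mono_null (fun q hq => ?_) hbad
    simp only [mem_prod, mem_compl_iff, mem_univ, and_true]
    exact hq
  -- the key real inequality for F
  have hFkey : ∀ z : ℝ, |z| ≤ M' → |F z| ≤ C_F * M' ^ p := fun z hz =>
    (hF z).trans (mul_le_mul_of_nonneg_left
      (Real.rpow_le_rpow (abs_nonneg z) hz (le_of_lt (lt_trans one_pos hp))) hCF.le)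
  -- pointwise a.e. bound on the Duhamel map
  rw [essSupNorm]
  refine essSup_le_of_ae_le _ ?_
  filter_upwards [hG1_ae, hG2_ae, ht_ae] with q hg1 hg2 ht
  obtain ⟨t, x⟩ := q
  simp only at hg1 hg2 ht ⊢
  have step1 : (‖duhamel D G_N F u₀ u t x‖₊ : ℝ≥0∞) ≤
      (‖∫ y in D, G_N t x y * u₀ y‖₊ : ℝ≥0∞) +
      (‖∫ τ in Ioo (0:ℝ) t, ∫ y in D, G_N (t - τ) x y * F (u τ y)‖₊ : ℝ≥0∞) := by
    rw [duhamel]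
    exact_mod_cast nnnorm_add_le _ _
  -- first term
  have term1 : (‖∫ y in D, G_N t x y * u₀ y‖₊ : ℝ≥0∞) ≤ ENNReal.ofReal (2 * C_L * R) := by
    calc (‖∫ y in D, G_N t x y * u₀ y‖₊ : ℝ≥0∞)
        ≤ ∫⁻ y in D, (‖G_N t x y * u₀ y‖₊ : ℝ≥0∞) :=
          enorm_integral_le_lintegral_enorm _
      _ = ∫⁻ y in D, (‖G_N t x y‖₊ : ℝ≥0∞) * (‖u₀ y‖₊ : ℝ≥0∞) := by
          simp [nnnorm_mul]
      _ ≤ ∫⁻ y in D, (‖G_N t x y‖₊ : ℝ≥0∞) * ENNReal.ofReal R := by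
          refine lintegral_mono_ae (hu₀_ae.mono fun y hy => ?_)
          exact mul_le_mul_right hy _
      _ = (∫⁻ y in D, (‖G_N t x y‖₊ : ℝ≥0∞)) * ENNReal.ofReal R :=
          lintegral_mul_const' _ _ ENNReal.ofReal_ne_top
      _ ≤ ENNReal.ofReal (2 * C_L) * ENNReal.ofReal R := mul_le_mul_left hg2 _
      _ = ENNReal.ofReal (2 * C_L * R) := (ENNReal.ofReal_mul (by positivity)).symm
  -- second term
  have hu_ae_t : ∀ᵐ τ ∂(volume.restrict (Ioo (0:ℝ) t)), ∀ᵐ y ∂(volume.restrict D),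
      (‖u τ y‖₊ : ℝ≥0∞) ≤ ENNReal.ofReal M' :=
    ae_restrict_of_ae_restrict_of_subset (Ioo_subset_Ioo_right ht.2.le) hu_ae
  have term2 : (‖∫ τ in Ioo (0:ℝ) t, ∫ y in D, G_N (t - τ) x y * F (u τ y)‖₊ : ℝ≥0∞) ≤
      ENNReal.ofReal (2 * C_L * T * (C_F * M' ^ p)) := by
    calc (‖∫ τ in Ioo (0:ℝ) t, ∫ y in D, G_N (t - τ) x y * F (u τ y)‖₊ : ℝ≥0∞)
        ≤ ∫⁻ τ in Ioo (0:ℝ) t, (‖∫ y in D, G_N (t - τ) x y * F (u τ y)‖₊ : ℝ≥0∞) :=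
          enorm_integral_le_lintegral_enorm _
      _ ≤ ∫⁻ τ in Ioo (0:ℝ) t, ∫⁻ y in D, (‖G_N (t - τ) x y * F (u τ y)‖₊ : ℝ≥0∞) :=
          lintegral_mono fun τ => enorm_integral_le_lintegral_enorm _
      _ ≤ ∫⁻ τ in Ioo (0:ℝ) t,
            (∫⁻ y in D, (‖G_N (t - τ) x y‖₊ : ℝ≥0∞)) * ENNReal.ofReal (C_F * M' ^ p) := by
          refine lintegral_mono_ae (hu_ae_t.mono fun τ hτ => ?_)
          rw [← lintegral_mul_const' _ _ ENNReal.ofReal_ne_top]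
          refine lintegral_mono_ae (hτ.mono fun y hy => ?_)
          rw [nnnorm_mul, ENNReal.coe_mul]
          refine mul_le_mul_right ?_ _
          rw [← (show ∀ a : ℝ, ENNReal.ofReal ‖a‖ = (‖a‖₊ : ℝ≥0∞) from fun a => ofReal_norm a), Real.norm_eq_abs]
          refine ENNReal.ofReal_le_ofReal (hFkey _ ?_)
          rw [← (show ∀ a : ℝ, ENNReal.ofReal ‖a‖ = (‖a‖₊ : ℝ≥0∞) from fun a => ofReal_norm a), Real.norm_eq_abs] at hy
          exact (ENNReal.ofReal_le_ofReal_iff hM'0).1 hy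
      _ = (∫⁻ τ in Ioo (0:ℝ) t, ∫⁻ y in D, (‖G_N (t - τ) x y‖₊ : ℝ≥0∞)) *
            ENNReal.ofReal (C_F * M' ^ p) :=
          lintegral_mul_const' _ _ ENNReal.ofReal_ne_top
      _ ≤ ENNReal.ofReal (2 * C_L * T) * ENNReal.ofReal (C_F * M' ^ p) :=
          mul_le_mul_left hg1 _
      _ = ENNReal.ofReal (2 * C_L * T * (C_F * M' ^ p)) :=
          (ENNReal.ofReal_mul (by positivity)).symm
  calc (‖duhamel D G_N F u₀ u t x‖₊ : ℝ≥0∞)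
      ≤ ENNReal.ofReal (2 * C_L * R) + ENNReal.ofReal (2 * C_L * T * (C_F * M' ^ p)) :=
        step1.trans (add_le_add term1 term2)
    _ = ENNReal.ofReal (2 * C_L * R + 2 * C_L * T * (C_F * M' ^ p)) :=
        (ENNReal.ofReal_add (by positivity) (by positivity)).symm
    _ ≤ ENNReal.ofReal M' := ENNReal.ofReal_le_ofReal (by linarith [hsmall, mul_assoc (2 * C_L * T) C_F (M' ^ p)])
end
end

section
/- (Lemma on the truncated map Φ_N, approximation part.) Let d ≥ 1, let D ⊆ ℝ^d be a bounded measurable set with positive finite Lebesgue measure |D|, let T > 0, ε > 0, and let r, s ∈ [1,∞] with Hölder conjugates r', s'. Let F : ℝ → ℝ be measurable, u₀ ∈ L^∞(D), and let G, G_N : (0,T)×D×D → ℝ be measurable kernels satisfying the truncation-error bounds ‖ ‖G(t−τ,x,y) − G_N(t−τ,x,y)‖_{L^{r'}_τ(0,t;L^{s'}_y)} ‖_{L^r_t(0,T;L^s_x)} ≤ ε and ‖ ‖G(t,x,·) − G_N(t,x,·)‖_{L^{s'}_y(D)} ‖_{L^r_t(0,T;L^s_x)} ≤ ε. Then for every measurable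 u : (0,T)×D → ℝ with F(u) ∈ L^r(0,T;L^s), the Duhamel maps Φ_{u₀} (with kernel G) and Φ_{N,u₀} (with kernel G_N) satisfy ‖Φ_{u₀}[u] − Φ_{N,u₀}[u]‖_{L^r(0,T;L^s)} ≤ ε ( |D|^{1/s} ‖u₀‖_{L^∞} + ‖F(u)‖_{L^r(0,T;L^s)} ). -/
open MeasureTheory ENNReal Set Filter

noncomputable section
set_option maxHeartbeats 1000000

section helpers
variable {α : Type*} [MeasurableSpace α] {μ : Measure α}

lemma eLp_mono_ae {q : ℝ≥0∞} {f g : α → ℝ≥0∞} (h : f ≤ᵐ[μ] g) : eLp μ q f ≤ eLp μ q g := by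
  unfold eLp
  split_ifs
  · exact essSup_mono_ae h
  · refine ENNReal.rpow_le_rpow ?_ (by positivity)
    exact lintegral_mono_ae (h.mono fun a ha => ENNReal.rpow_le_rpow ha ENNReal.toReal_nonneg)

lemma eLp_mono_measure {μ ν : Measure α} (h : μ ≤ ν) {q : ℝ≥0∞} {f : α → ℝ≥0∞} :
    eLp μ q f ≤ eLp ν q f := by
  unfold eLp
  split_ifs
  · exact essSup_mono_measure (Measure.absolutelyContinuous_of_le h)
  · exact ENNReal.rpow_le_rpow (lintegral_mono' h le_rfl) (by positivity)

lemma one_le_toReal {q : ℝ≥0∞} (hq : 1 ≤ q) (hqt : q ≠ ⊤) : (1:ℝ) ≤ q.toReal :=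
  ENNReal.toReal_one ▸ ENNReal.toReal_mono hqt hq

lemma eLp_add_le {q : ℝ≥0∞} (hq : 1 ≤ q) {f g : α → ℝ≥0∞} (hf : AEMeasurable f μ)
    (hg : AEMeasurable g μ) : eLp μ q (fun a => f a + g a) ≤ eLp μ q f + eLp μ q g := by
  unfold eLp
  split_ifs with hqt
  · refine essSup_le_of_ae_le _ ?_
    filter_upwards [ae_le_essSup f, ae_le_essSup g] with a ha hb
    exact add_le_add ha hb
  · exact ENNReal.lintegral_Lp_add_le hf hg (one_le_toReal hq hqt)

lemma eLp_mul_const {q : ℝ≥0∞} (hq : 1 ≤ q) {f : α → ℝ≥0∞} {c : ℝ≥0∞} (hc : c ≠ ⊤) :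
    eLp μ q (fun a => f a * c) ≤ eLp μ q f * c := by
  unfold eLp
  split_ifs with hqt
  · refine essSup_le_of_ae_le _ ?_
    filter_upwards [ae_le_essSup f] with a ha using mul_le_mul_left ha c
  · have hq0 : q.toReal ≠ 0 := by have := one_le_toReal hq hqt; linarith
    calc (∫⁻ a, (f a * c) ^ q.toReal ∂μ) ^ (1/q.toReal)
        = ((∫⁻ a, f a ^ q.toReal ∂μ) * c ^ q.toReal) ^ (1/q.toReal) := by
          rw [← lintegral_mul_const' _ _
            (ENNReal.rpow_ne_top_of_nonneg ENNReal.toReal_nonneg hc)]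
          simp_rw [ENNReal.mul_rpow_of_nonneg _ _ ENNReal.toReal_nonneg]
      _ = (∫⁻ a, f a ^ q.toReal ∂μ) ^ (1/q.toReal) * c := by
          rw [ENNReal.mul_rpow_of_nonneg _ _ (by positivity), ← ENNReal.rpow_mul,
            mul_one_div, div_self hq0, ENNReal.rpow_one]
      _ ≤ (∫⁻ a, f a ^ q.toReal ∂μ) ^ (1/q.toReal) * c := le_rfl

lemma eLp_le_rpow_mul_essSup {q : ℝ≥0∞} (hq : 1 ≤ q) (f : α → ℝ≥0∞) :
    eLp μ q f ≤ μ Set.univ ^ invE q * essSup f μ := by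
  unfold eLp invE
  split_ifs with hqt
  · simp [hqt]
  · have hq0 : q.toReal ≠ 0 := by have := one_le_toReal hq hqt; linarith
    have hinv : (1 / q).toReal = 1 / q.toReal := by
      rw [one_div, one_div, ENNReal.toReal_inv]
    rw [hinv]
    calc (∫⁻ a, f a ^ q.toReal ∂μ) ^ (1/q.toReal)
        ≤ (∫⁻ _, (essSup f μ) ^ q.toReal ∂μ) ^ (1/q.toReal) := by
          refine ENNReal.rpow_le_rpow (lintegral_mono_ae ?_) (by positivity)
          exact (ae_le_essSup f).mono fun a ha => ENNReal.rpow_le_rpow ha ENNReal.toReal_nonneg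
      _ = ((essSup f μ) ^ q.toReal * μ Set.univ) ^ (1/q.toReal) := by rw [lintegral_const]
      _ = μ Set.univ ^ (1/q.toReal) * essSup f μ := by
          rw [ENNReal.mul_rpow_of_nonneg _ _ (by positivity), ← ENNReal.rpow_mul,
            mul_one_div, div_self hq0, ENNReal.rpow_one, mul_comm]

lemma conj_trichotomy {q q' : ℝ≥0∞} (h : 1/q + 1/q' = 1) :
    (q = 1 ∧ q' = ⊤) ∨ (q = ⊤ ∧ q' = 1) ∨
      (q ≠ ⊤ ∧ q' ≠ ⊤ ∧ q.toReal.HolderConjugate q'.toReal) := by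
  have hC : q.HolderConjugate q' := ENNReal.holderConjugate_iff.mpr (by simpa [one_div] using h)
  have hq1 : 1 ≤ q := ENNReal.HolderConjugate.one_le q q'
  have hq'1 : 1 ≤ q' := @ENNReal.HolderConjugate.one_le q' q hC.symm
  rcases eq_or_ne q 1 with rfl | hqone
  · left
    refine ⟨rfl, ?_⟩
    have h' : 1 + 1/q' = 1 + 0 := by
      rw [add_zero]; simpa using h
    have h0 : 1/q' = 0 := (ENNReal.add_right_inj ENNReal.one_ne_top).mp h'
    rw [one_div] at h0
    exact ENNReal.inv_eq_zero.mp h0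
  rcases eq_or_ne q ⊤ with rfl | hqt
  · right; left
    refine ⟨rfl, ?_⟩
    have h1 : 1/q' = 1 := by simpa using h
    rw [one_div] at h1
    exact ENNReal.inv_eq_one.mp h1
  · right; right
    have hq't : q' ≠ ⊤ := by
      rintro rfl
      apply hqone
      have h1 : 1/q = 1 := by simpa using h
      rw [one_div] at h1
      have := ENNReal.inv_eq_one.mp h1
      exact this
    have hq0 : q ≠ 0 := (zero_lt_one.trans_le hq1).ne'
    have hq'0 : q' ≠ 0 := (zero_lt_one.trans_le hq'1).ne'
    refine ⟨hqt, hq't, Real.holderConjugate_iff.mpr ⟨?_, ?_⟩⟩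
    · exact (ENNReal.toReal_lt_toReal ENNReal.one_ne_top hqt).mpr (lt_of_le_of_ne hq1 (Ne.symm hqone)) |>.trans_le' (by simp)
    · have := congrArg ENNReal.toReal h
      rw [ENNReal.toReal_add (by simp [one_div, hq0]) (by simp [one_div, hq'0])] at this
      simpa [one_div, ENNReal.toReal_inv] using this

lemma eLp_lintegral_mul_le {q q' : ℝ≥0∞} (h : 1/q + 1/q' = 1)
    {f g : α → ℝ≥0∞} (hf : AEMeasurable f μ) (hg : AEMeasurable g μ) :
    ∫⁻ a, f a * g a ∂μ ≤ eLp μ q f * eLp μ q' g := by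
  rcases conj_trichotomy h with ⟨rfl, rfl⟩ | ⟨rfl, rfl⟩ | ⟨hqt, hq't, hconj⟩
  · calc ∫⁻ a, f a * g a ∂μ ≤ ∫⁻ a, f a * essSup g μ ∂μ :=
          lintegral_mono_ae ((ae_le_essSup g).mono fun a ha => mul_le_mul_right ha _)
      _ = (∫⁻ a, f a ∂μ) * essSup g μ := lintegral_mul_const'' _ hf
      _ = eLp μ 1 f * eLp μ ⊤ g := by simp [eLp]
  · calc ∫⁻ a, f a * g a ∂μ ≤ ∫⁻ a, essSup f μ * g a ∂μ :=
          lintegral_mono_ae ((ae_le_essSup f).mono fun a ha => mul_le_mul_left ha _)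
      _ = essSup f μ * ∫⁻ a, g a ∂μ := lintegral_const_mul'' _ hg
      _ = eLp μ ⊤ f * eLp μ 1 g := by simp [eLp]
  · have := ENNReal.lintegral_mul_le_Lp_mul_Lq μ hconj hf hg
    simpa [eLp, hqt, hq't] using this

lemma measurable_essSup_prod {β : Type*} [MeasurableSpace β] (ν : Measure β) [SFinite ν]
    {F : α × β → ℝ≥0∞} (hF : Measurable F) :
    Measurable fun a => essSup (fun b => F (a, b)) ν := by
  apply measurable_of_Iic
  intro c
  have key : ∀ a, essSup (fun b => F (a, b)) ν ≤ c ↔ ν (Prod.mk a ⁻¹' {p | c < F p}) = 0 := by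
    intro a
    constructor
    · intro hle
      have h1 : ∀ᵐ b ∂ν, F (a, b) ≤ c := (ae_le_essSup _).mono fun b hb => hb.trans hle
      rw [ae_iff] at h1
      simpa [not_le, Set.preimage] using h1
    · intro h0
      refine essSup_le_of_ae_le c ?_
      have hb : ∀ᵐ b ∂ν, F (a, b) ≤ c := by
        rw [ae_iff]
        simpa [not_le, Set.preimage] using h0
      exact hb
  have hset : (fun a => essSup (fun b => F (a, b)) ν) ⁻¹' Iic c =
      (fun a => ν (Prod.mk a ⁻¹' {p | c < F p})) ⁻¹' {0} := by
    ext a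
    simp [Set.mem_preimage, Set.mem_Iic, key a]
  rw [hset]
  exact measurable_measure_prodMk_left (measurableSet_lt measurable_const hF)
    (measurableSet_singleton 0)

lemma measurable_eLp_prod {β : Type*} [MeasurableSpace β] (ν : Measure β) [SFinite ν] (q : ℝ≥0∞)
    {F : α × β → ℝ≥0∞} (hF : Measurable F) :
    Measurable fun a => eLp ν q (fun b => F (a, b)) := by
  unfold eLp
  split_ifs
  · exact measurable_essSup_prod ν hF
  · have h1 : Measurable fun a => ∫⁻ b, F (a, b) ^ q.toReal ∂ν :=
      Measurable.lintegral_prod_right' (hF.pow_const _)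
    exact h1.pow_const _

lemma ennnorm_integral_sub_le {f g : α → ℝ} (hf : AEStronglyMeasurable f μ)
    (hg : AEStronglyMeasurable g μ) :
    (‖(∫ a, f a ∂μ) - ∫ a, g a ∂μ‖₊ : ℝ≥0∞) ≤ ∫⁻ a, ‖f a - g a‖₊ ∂μ := by
  by_cases hfin : ∫⁻ a, (‖f a - g a‖₊ : ℝ≥0∞) ∂μ = ⊤
  · rw [hfin]; exact le_top
  have hsub : Integrable (fun a => f a - g a) μ :=
    ⟨hf.sub hg, lt_top_iff_ne_top.2 hfin⟩
  by_cases hfi : Integrable f μ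
  · have hgi : Integrable g μ := by
      have h2 := hfi.sub hsub
      have he : (f - fun a => f a - g a) = g := by
        funext a; simp [Pi.sub_apply]
      rwa [he] at h2
    rw [← integral_sub hfi hgi]
    exact enorm_integral_le_lintegral_enorm _
  · have hgi : ¬ Integrable g μ := by
      intro hgi
      apply hfi
      have h2 := hsub.add hgi
      have he : ((fun a => f a - g a) + g) = f := by
        funext a; simp [Pi.add_apply]
      rwa [he] at h2
    rw [integral_undef hfi, integral_undef hgi, sub_zero]
    simp

end helpers

/-- approximation of the Duhamel map by the truncated-kernel Duhamel map. -/
theorem truncated_map_approximation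
    {d : ℕ} (hd : 1 ≤ d) (D : Set (Esp d)) (hDmeas : MeasurableSet D)
    (hDbdd : Bornology.IsBounded D) (hDpos : 0 < volume D) (hDfin : volume D ≠ ⊤)
    (T ε : ℝ) (hT : 0 < T) (hε : 0 < ε)
    (r s r' s' : ℝ≥0∞) (hr : 1 ≤ r) (hs : 1 ≤ s)
    (hr' : 1 / r + 1 / r' = 1) (hs' : 1 / s + 1 / s' = 1)
    (F : ℝ → ℝ) (hFm : Measurable F)
    (u₀ : Esp d → ℝ) (hu₀m : Measurable u₀) (hu₀fin : lqNorm D ⊤ u₀ ≠ ⊤)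
    (G G_N : ℝ → Esp d → Esp d → ℝ)
    (hGm : Measurable fun q : ℝ × Esp d × Esp d => G q.1 q.2.1 q.2.2)
    (hGNm : Measurable fun q : ℝ × Esp d × Esp d => G_N q.1 q.2.1 q.2.2)
    (hK1 : kernelNorm₁ D T r s r' s' (fun t x y => G t x y - G_N t x y) ≤ ENNReal.ofReal ε)
    (hK2 : kernelNorm₂ D T r s s' (fun t x y => G t x y - G_N t x y) ≤ ENNReal.ofReal ε) :
    ∀ u : ℝ → Esp d → ℝ, Measurable (Function.uncurry u) →
      mixedNorm D T r s (fun t x => F (u t x)) ≠ ⊤ →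
      mixedNorm D T r s (fun t x => duhamel D G F u₀ u t x - duhamel D G_N F u₀ u t x) ≤
        ENNReal.ofReal ε *
          (ENNReal.ofReal ((volume D).toReal ^ invE s) * lqNorm D ⊤ u₀ +
            mixedNorm D T r s fun t x => F (u t x)) := by
  intro u hum hFfin
  have hs'1 : 1 ≤ s' := by
    rw [← ENNReal.inv_le_one, ← one_div]
    calc 1/s' ≤ 1/s + 1/s' := le_add_self
      _ = 1 := hs'
  have hr'1 : 1 ≤ r' := by
    rw [← ENNReal.inv_le_one, ← one_div]
    calc 1/r' ≤ 1/r + 1/r' := le_add_self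
      _ = 1 := hr'
  have hs'c : 1/s' + 1/s = 1 := by rw [add_comm]; exact hs'
  have hr'c : 1/r' + 1/r = 1 := by rw [add_comm]; exact hr'
  have hKm : Measurable fun q : ℝ × Esp d × Esp d => G q.1 q.2.1 q.2.2 - G_N q.1 q.2.1 q.2.2 :=
    hGm.sub hGNm
  have hKsec : ∀ (t : ℝ) (x : Esp d), Measurable fun y => G t x y - G_N t x y := fun t x =>
    hKm.comp (measurable_const.prodMk (measurable_const.prodMk measurable_id))
  have hGsec : ∀ (H : ℝ → Esp d → Esp d → ℝ),
      (Measurable fun q : ℝ × Esp d × Esp d => H q.1 q.2.1 q.2.2) →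
      ∀ (a : ℝ) (b : Esp d), Measurable fun y => H a b y := fun H hH a b =>
    hH.comp (measurable_const.prodMk (measurable_const.prodMk measurable_id))
  have hFum : Measurable fun p : ℝ × Esp d => F (u p.1 p.2) := hFm.comp hum
  -- Step 1: pointwise bound
  have step1 : ∀ (t : ℝ) (x : Esp d),
      (‖duhamel D G F u₀ u t x - duhamel D G_N F u₀ u t x‖₊ : ℝ≥0∞) ≤
        (∫⁻ y, (‖G t x y - G_N t x y‖₊ : ℝ≥0∞) * ‖u₀ y‖₊ ∂(volume.restrict D)) + (∫⁻ τ in Ioo (0:ℝ) t, ∫⁻ y, (‖G (t - τ) x y - G_N (t - τ) x y‖₊ : ℝ≥0∞) * ‖F (u τ y)‖₊ ∂(volume.restrict D)) := by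
    intro t x
    have e : duhamel D G F u₀ u t x - duhamel D G_N F u₀ u t x =
        ((∫ y in D, G t x y * u₀ y) - ∫ y in D, G_N t x y * u₀ y) +
        ((∫ τ in Ioo (0 : ℝ) t, ∫ y in D, G (t - τ) x y * F (u τ y)) -
          ∫ τ in Ioo (0 : ℝ) t, ∫ y in D, G_N (t - τ) x y * F (u τ y)) := by
      simp only [duhamel]; ring
    have h₁ : (‖(∫ y in D, G t x y * u₀ y) - ∫ y in D, G_N t x y * u₀ y‖₊ : ℝ≥0∞) ≤
        ∫⁻ y, (‖G t x y - G_N t x y‖₊ : ℝ≥0∞) * ‖u₀ y‖₊ ∂(volume.restrict D) := by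
      refine (ennnorm_integral_sub_le
        (((hGsec G hGm t x).mul hu₀m).aestronglyMeasurable)
        (((hGsec G_N hGNm t x).mul hu₀m).aestronglyMeasurable)).trans (le_of_eq ?_)
      refine lintegral_congr fun y => ?_
      simp only [Pi.mul_apply, Function.comp_apply, id_eq, Function.uncurry_apply_pair]
      rw [← sub_mul]
      simp [nnnorm_mul]
    have h₂ : (‖(∫ τ in Ioo (0 : ℝ) t, ∫ y in D, G (t - τ) x y * F (u τ y)) -
        ∫ τ in Ioo (0 : ℝ) t, ∫ y in D, G_N (t - τ) x y * F (u τ y)‖₊ : ℝ≥0∞) ≤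
        ∫⁻ τ in Ioo (0:ℝ) t, ∫⁻ y, (‖G (t - τ) x y - G_N (t - τ) x y‖₊ : ℝ≥0∞) * ‖F (u τ y)‖₊ ∂(volume.restrict D) := by
      have hsm : ∀ (H : ℝ → Esp d → Esp d → ℝ),
          (Measurable fun q : ℝ × Esp d × Esp d => H q.1 q.2.1 q.2.2) →
          AEStronglyMeasurable (fun τ => ∫ y in D, H (t - τ) x y * F (u τ y))
            (volume.restrict (Ioo (0:ℝ) t)) := by
        intro H hH
        have hm : StronglyMeasurable fun p : ℝ × Esp d => H (t - p.1) x p.2 * F (u p.1 p.2) :=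
          ((hH.comp ((measurable_const.sub measurable_fst).prodMk
            (measurable_const.prodMk measurable_snd))).mul hFum).stronglyMeasurable
        exact hm.integral_prod_right'.aestronglyMeasurable
      refine (ennnorm_integral_sub_le (hsm G hGm) (hsm G_N hGNm)).trans ?_
      refine lintegral_mono fun τ => ?_
      refine (ennnorm_integral_sub_le
        (((hGsec G hGm (t - τ) x).mul
          (hFm.comp (hum.comp (measurable_const.prodMk measurable_id)))).aestronglyMeasurable)
        (((hGsec G_N hGNm (t - τ) x).mul
          (hFm.comp (hum.comp (measurable_const.prodMk measurable_id)))).aestronglyMeasurable)).trans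
        (le_of_eq ?_)
      refine lintegral_congr fun y => ?_
      simp only [Pi.mul_apply, Function.comp_apply, id_eq, Function.uncurry_apply_pair]
      rw [← sub_mul]
      simp [nnnorm_mul]
    rw [e]
    refine le_trans ?_ (add_le_add h₁ h₂)
    exact_mod_cast nnnorm_add_le _ _
  -- Step 2: measurability of the majorants
  have hg₁um : Measurable fun p : ℝ × Esp d => ∫⁻ y, (‖G p.1 p.2 y - G_N p.1 p.2 y‖₊ : ℝ≥0∞) * ‖u₀ y‖₊ ∂(volume.restrict D) := by
    have hm : Measurable fun z : (ℝ × Esp d) × Esp d =>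
        (‖G z.1.1 z.1.2 z.2 - G_N z.1.1 z.1.2 z.2‖₊ : ℝ≥0∞) * ‖u₀ z.2‖₊ := by
      refine Measurable.mul ?_ ((hu₀m.comp measurable_snd).enorm)
      exact (hKm.comp ((measurable_fst.fst).prodMk
        ((measurable_fst.snd).prodMk measurable_snd))).enorm
    exact hm.lintegral_prod_right'
  have hg₂inner : Measurable fun q : (ℝ × Esp d) × ℝ =>
      ∫⁻ y, (‖G (q.1.1 - q.2) q.1.2 y - G_N (q.1.1 - q.2) q.1.2 y‖₊ : ℝ≥0∞) * ‖F (u q.2 y)‖₊ ∂(volume.restrict D) := by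
    have hm : Measurable fun z : ((ℝ × Esp d) × ℝ) × Esp d =>
        (‖G (z.1.1.1 - z.1.2) z.1.1.2 z.2 - G_N (z.1.1.1 - z.1.2) z.1.1.2 z.2‖₊ : ℝ≥0∞) * ‖F (u z.1.2 z.2)‖₊ := by
      refine Measurable.mul (f := fun z : ((ℝ × Esp d) × ℝ) × Esp d => (‖G (z.1.1.1 - z.1.2) z.1.1.2 z.2 - G_N (z.1.1.1 - z.1.2) z.1.1.2 z.2‖₊ : ℝ≥0∞)) (g := fun z : ((ℝ × Esp d) × ℝ) × Esp d => (‖F (u z.1.2 z.2)‖₊ : ℝ≥0∞)) ?_ ?_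
      · exact (hKm.comp ((measurable_fst.fst.fst.sub measurable_fst.snd).prodMk
          ((measurable_fst.fst.snd).prodMk measurable_snd))).enorm
      · exact (hFm.comp (hum.comp ((measurable_fst.snd).prodMk measurable_snd))).enorm
    exact hm.lintegral_prod_right'
  have hg₂um : Measurable fun p : ℝ × Esp d => ∫⁻ τ in Ioo (0:ℝ) p.1, ∫⁻ y, (‖G (p.1 - τ) p.2 y - G_N (p.1 - τ) p.2 y‖₊ : ℝ≥0∞) * ‖F (u τ y)‖₊ ∂(volume.restrict D) := by
    have he : (fun p : ℝ × Esp d => ∫⁻ τ in Ioo (0:ℝ) p.1, ∫⁻ y, (‖G (p.1 - τ) p.2 y - G_N (p.1 - τ) p.2 y‖₊ : ℝ≥0∞) * ‖F (u τ y)‖₊ ∂(volume.restrict D)) = fun p : ℝ × Esp d =>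
        ∫⁻ τ, (if τ ∈ Ioo (0:ℝ) p.1 then
          ∫⁻ y, (‖G (p.1 - τ) p.2 y - G_N (p.1 - τ) p.2 y‖₊ : ℝ≥0∞) * ‖F (u τ y)‖₊ ∂(volume.restrict D) else 0) := by
      funext p
      rw [← lintegral_indicator measurableSet_Ioo]
      exact lintegral_congr fun τ => Set.indicator_apply _ _ _
    rw [he]
    have hset : MeasurableSet {q : (ℝ × Esp d) × ℝ | q.2 ∈ Ioo (0:ℝ) q.1.1} := by
      have he2 : {q : (ℝ × Esp d) × ℝ | q.2 ∈ Ioo (0:ℝ) q.1.1}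
          = {q : (ℝ × Esp d) × ℝ | (0:ℝ) < q.2} ∩ {q : (ℝ × Esp d) × ℝ | q.2 < q.1.1} := by
        ext q; simp [Set.mem_Ioo]
      rw [he2]
      exact (measurableSet_lt measurable_const measurable_snd).inter
        (measurableSet_lt measurable_snd measurable_fst.fst)
    have hite : Measurable fun q : (ℝ × Esp d) × ℝ =>
        (if q.2 ∈ Ioo (0:ℝ) q.1.1 then
          ∫⁻ y, (‖G (q.1.1 - q.2) q.1.2 y - G_N (q.1.1 - q.2) q.1.2 y‖₊ : ℝ≥0∞) *
            ‖F (u q.2 y)‖₊ ∂(volume.restrict D) else 0) :=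
      Measurable.ite hset hg₂inner measurable_const
    exact hite.lintegral_prod_right'
  have hg₁tm : ∀ t : ℝ, Measurable fun x => ∫⁻ y, (‖G t x y - G_N t x y‖₊ : ℝ≥0∞) * ‖u₀ y‖₊ ∂(volume.restrict D) := by
    intro t
    have h := hg₁um.comp (measurable_prodMk_left : Measurable fun x : Esp d => (t, x))
    exact h
  have hg₂tm : ∀ t : ℝ, Measurable fun x => ∫⁻ τ in Ioo (0:ℝ) t, ∫⁻ y, (‖G (t - τ) x y - G_N (t - τ) x y‖₊ : ℝ≥0∞) * ‖F (u τ y)‖₊ ∂(volume.restrict D) := by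
    intro t
    have h := hg₂um.comp (measurable_prodMk_left : Measurable fun x : Esp d => (t, x))
    exact h
  have hEg₁m : Measurable fun t : ℝ => eLp (volume.restrict D) s (fun x => ∫⁻ y, (‖G t x y - G_N t x y‖₊ : ℝ≥0∞) * ‖u₀ y‖₊ ∂(volume.restrict D)) := by
    have h := measurable_eLp_prod (volume.restrict D) s hg₁um
    exact h
  have hEg₂m : Measurable fun t : ℝ => eLp (volume.restrict D) s (fun x => ∫⁻ τ in Ioo (0:ℝ) t, ∫⁻ y, (‖G (t - τ) x y - G_N (t - τ) x y‖₊ : ℝ≥0∞) * ‖F (u τ y)‖₊ ∂(volume.restrict D)) := by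
    have h := measurable_eLp_prod (volume.restrict D) s hg₂um
    exact h
  -- Step 3: splitting
  have step3 : mixedNorm D T r s
      (fun t x => duhamel D G F u₀ u t x - duhamel D G_N F u₀ u t x) ≤
      (eLp (volume.restrict (Ioo (0:ℝ) T)) r (fun t => eLp (volume.restrict D) s (fun x => ∫⁻ y, (‖G t x y - G_N t x y‖₊ : ℝ≥0∞) * ‖u₀ y‖₊ ∂(volume.restrict D)))) + (eLp (volume.restrict (Ioo (0:ℝ) T)) r (fun t => eLp (volume.restrict D) s (fun x => ∫⁻ τ in Ioo (0:ℝ) t, ∫⁻ y, (‖G (t - τ) x y - G_N (t - τ) x y‖₊ : ℝ≥0∞) * ‖F (u τ y)‖₊ ∂(volume.restrict D)))) := by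
    have pt : ∀ t : ℝ, lqNorm D s
        (fun x => duhamel D G F u₀ u t x - duhamel D G_N F u₀ u t x) ≤
        eLp (volume.restrict D) s (fun x => ∫⁻ y, (‖G t x y - G_N t x y‖₊ : ℝ≥0∞) * ‖u₀ y‖₊ ∂(volume.restrict D)) + eLp (volume.restrict D) s (fun x => ∫⁻ τ in Ioo (0:ℝ) t, ∫⁻ y, (‖G (t - τ) x y - G_N (t - τ) x y‖₊ : ℝ≥0∞) * ‖F (u τ y)‖₊ ∂(volume.restrict D)) := fun t =>
      (eLp_mono_ae (ae_of_all _ fun x => step1 t x)).trans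
        (eLp_add_le hs (hg₁tm t).aemeasurable (hg₂tm t).aemeasurable)
    exact (eLp_mono_ae (ae_of_all _ pt)).trans
      (eLp_add_le hr hEg₁m.aemeasurable hEg₂m.aemeasurable)
  -- the constant C
  have hu₀ess : essSup (fun y => (‖u₀ y‖₊ : ℝ≥0∞)) (volume.restrict D) ≠ ⊤ := by
    have hh : lqNorm D ⊤ u₀ = essSup (fun y => (‖u₀ y‖₊ : ℝ≥0∞)) (volume.restrict D) := by
      simp [lqNorm, eLp]
    rwa [hh] at hu₀fin
  set C : ℝ≥0∞ := volume D ^ invE s * essSup (fun y => (‖u₀ y‖₊ : ℝ≥0∞)) (volume.restrict D) with hCdef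
  have hC : C ≠ ⊤ := ENNReal.mul_ne_top
    (ENNReal.rpow_ne_top_of_nonneg ENNReal.toReal_nonneg hDfin) hu₀ess
  -- Step 4
  have step4 : (eLp (volume.restrict (Ioo (0:ℝ) T)) r (fun t => eLp (volume.restrict D) s (fun x => ∫⁻ y, (‖G t x y - G_N t x y‖₊ : ℝ≥0∞) * ‖u₀ y‖₊ ∂(volume.restrict D)))) ≤ ENNReal.ofReal ε * C := by
    have pt : ∀ (t : ℝ) (x : Esp d), (∫⁻ y, (‖G t x y - G_N t x y‖₊ : ℝ≥0∞) * ‖u₀ y‖₊ ∂(volume.restrict D)) ≤ (eLp (volume.restrict D) s' fun y => (‖G t x y - G_N t x y‖₊ : ℝ≥0∞)) * C := by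
      intro t x
      calc (∫⁻ y, (‖G t x y - G_N t x y‖₊ : ℝ≥0∞) * ‖u₀ y‖₊ ∂(volume.restrict D))
          ≤ (eLp (volume.restrict D) s' fun y => (‖G t x y - G_N t x y‖₊ : ℝ≥0∞)) * eLp (volume.restrict D) s fun y => (‖u₀ y‖₊ : ℝ≥0∞) :=
            eLp_lintegral_mul_le hs'c (hKsec t x).enorm.aemeasurable
              hu₀m.enorm.aemeasurable
        _ ≤ (eLp (volume.restrict D) s' fun y => (‖G t x y - G_N t x y‖₊ : ℝ≥0∞)) * C := by
            rw [hCdef]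
            refine mul_le_mul_right ?_ _
            have h := eLp_le_rpow_mul_essSup (μ := (volume.restrict D)) hs (fun y => (‖u₀ y‖₊ : ℝ≥0∞))
            rwa [Measure.restrict_apply_univ] at h
    calc (eLp (volume.restrict (Ioo (0:ℝ) T)) r (fun t => eLp (volume.restrict D) s (fun x => ∫⁻ y, (‖G t x y - G_N t x y‖₊ : ℝ≥0∞) * ‖u₀ y‖₊ ∂(volume.restrict D))))
        ≤ eLp (volume.restrict (Ioo (0:ℝ) T)) r (fun t => eLp (volume.restrict D) s (fun x => (eLp (volume.restrict D) s' fun y => (‖G t x y - G_N t x y‖₊ : ℝ≥0∞)) * C)) :=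
          eLp_mono_ae (ae_of_all _ fun t => eLp_mono_ae (ae_of_all _ fun x => pt t x))
      _ ≤ eLp (volume.restrict (Ioo (0:ℝ) T)) r (fun t => eLp (volume.restrict D) s (fun x => eLp (volume.restrict D) s' fun y => (‖G t x y - G_N t x y‖₊ : ℝ≥0∞)) * C) :=
          eLp_mono_ae (ae_of_all _ fun t => eLp_mul_const hs hC)
      _ ≤ eLp (volume.restrict (Ioo (0:ℝ) T)) r (fun t => eLp (volume.restrict D) s (fun x => eLp (volume.restrict D) s' fun y => (‖G t x y - G_N t x y‖₊ : ℝ≥0∞))) * C :=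
          eLp_mul_const hr hC
      _ ≤ ENNReal.ofReal ε * C := mul_le_mul_left hK2 C
  -- Step 5
  have step5 : (eLp (volume.restrict (Ioo (0:ℝ) T)) r (fun t => eLp (volume.restrict D) s (fun x => ∫⁻ τ in Ioo (0:ℝ) t, ∫⁻ y, (‖G (t - τ) x y - G_N (t - τ) x y‖₊ : ℝ≥0∞) * ‖F (u τ y)‖₊ ∂(volume.restrict D)))) ≤ ENNReal.ofReal ε * (mixedNorm D T r s (fun t x => F (u t x))) := by
    have pt : ∀ t ∈ Ioo (0:ℝ) T, ∀ x : Esp d,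
        (∫⁻ τ in Ioo (0:ℝ) t, ∫⁻ y, (‖G (t - τ) x y - G_N (t - τ) x y‖₊ : ℝ≥0∞) * ‖F (u τ y)‖₊ ∂(volume.restrict D)) ≤ (eLp (volume.restrict (Ioo (0:ℝ) t)) r' fun τ => eLp (volume.restrict D) s' fun y => (‖G (t - τ) x y - G_N (t - τ) x y‖₊ : ℝ≥0∞)) * (mixedNorm D T r s (fun t x => F (u t x))) := by
      intro t ht x
      have hτf : Measurable fun τ : ℝ => eLp (volume.restrict D) s' fun y => (‖G (t - τ) x y - G_N (t - τ) x y‖₊ : ℝ≥0∞) := by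
        have hm : Measurable fun p : ℝ × Esp d =>
            (‖G (t - p.1) x p.2 - G_N (t - p.1) x p.2‖₊ : ℝ≥0∞) :=
          (hKm.comp ((measurable_const.sub measurable_fst).prodMk
            (measurable_const.prodMk measurable_snd))).enorm
        have h := measurable_eLp_prod (volume.restrict D) s' hm
        exact h
      have hτg : Measurable fun τ : ℝ => eLp (volume.restrict D) s fun y => (‖F (u τ y)‖₊ : ℝ≥0∞) := by
        have h := measurable_eLp_prod (volume.restrict D) s hFum.enorm
        exact h
      calc (∫⁻ τ in Ioo (0:ℝ) t, ∫⁻ y, (‖G (t - τ) x y - G_N (t - τ) x y‖₊ : ℝ≥0∞) * ‖F (u τ y)‖₊ ∂(volume.restrict D))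
          ≤ ∫⁻ τ in Ioo (0:ℝ) t,
              (eLp (volume.restrict D) s' fun y => (‖G (t - τ) x y - G_N (t - τ) x y‖₊ : ℝ≥0∞)) *
              (eLp (volume.restrict D) s fun y => (‖F (u τ y)‖₊ : ℝ≥0∞)) := by
            refine lintegral_mono fun τ => ?_
            exact eLp_lintegral_mul_le hs'c (hKsec (t - τ) x).enorm.aemeasurable
              ((hFm.comp (hum.comp
                (measurable_const.prodMk measurable_id))).enorm).aemeasurable
        _ ≤ (eLp (volume.restrict (Ioo (0:ℝ) t)) r' fun τ => eLp (volume.restrict D) s' fun y => (‖G (t - τ) x y - G_N (t - τ) x y‖₊ : ℝ≥0∞)) *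
            (eLp (volume.restrict (Ioo (0:ℝ) t)) r fun τ =>
              eLp (volume.restrict D) s fun y => (‖F (u τ y)‖₊ : ℝ≥0∞)) :=
            eLp_lintegral_mul_le hr'c hτf.aemeasurable hτg.aemeasurable
        _ ≤ (eLp (volume.restrict (Ioo (0:ℝ) t)) r' fun τ => eLp (volume.restrict D) s' fun y => (‖G (t - τ) x y - G_N (t - τ) x y‖₊ : ℝ≥0∞)) * (mixedNorm D T r s (fun t x => F (u t x))) := by
            refine mul_le_mul_right ?_ _
            exact eLp_mono_measure
              (Measure.restrict_mono (Ioo_subset_Ioo le_rfl ht.2.le) le_rfl)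
    calc (eLp (volume.restrict (Ioo (0:ℝ) T)) r (fun t => eLp (volume.restrict D) s (fun x => ∫⁻ τ in Ioo (0:ℝ) t, ∫⁻ y, (‖G (t - τ) x y - G_N (t - τ) x y‖₊ : ℝ≥0∞) * ‖F (u τ y)‖₊ ∂(volume.restrict D))))
        ≤ eLp (volume.restrict (Ioo (0:ℝ) T)) r (fun t => eLp (volume.restrict D) s (fun x => (eLp (volume.restrict (Ioo (0:ℝ) t)) r' fun τ => eLp (volume.restrict D) s' fun y => (‖G (t - τ) x y - G_N (t - τ) x y‖₊ : ℝ≥0∞)) * (mixedNorm D T r s (fun t x => F (u t x))))) := by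
          refine eLp_mono_ae ?_
          filter_upwards [ae_restrict_mem measurableSet_Ioo] with t ht
          exact eLp_mono_ae (ae_of_all _ fun x => pt t ht x)
      _ ≤ eLp (volume.restrict (Ioo (0:ℝ) T)) r (fun t => eLp (volume.restrict D) s (fun x => eLp (volume.restrict (Ioo (0:ℝ) t)) r' fun τ => eLp (volume.restrict D) s' fun y => (‖G (t - τ) x y - G_N (t - τ) x y‖₊ : ℝ≥0∞)) * (mixedNorm D T r s (fun t x => F (u t x)))) :=
          eLp_mono_ae (ae_of_all _ fun t => eLp_mul_const hs hFfin)
      _ ≤ eLp (volume.restrict (Ioo (0:ℝ) T)) r (fun t => eLp (volume.restrict D) s (fun x => eLp (volume.restrict (Ioo (0:ℝ) t)) r' fun τ => eLp (volume.restrict D) s' fun y => (‖G (t - τ) x y - G_N (t - τ) x y‖₊ : ℝ≥0∞))) * (mixedNorm D T r s (fun t x => F (u t x))) :=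
          eLp_mul_const hr hFfin
      _ ≤ ENNReal.ofReal ε * (mixedNorm D T r s (fun t x => F (u t x))) := mul_le_mul_left hK1 _
  -- Conclusion
  have hinvs : (0:ℝ) ≤ invE s := by simp only [invE]; exact ENNReal.toReal_nonneg
  have hCeq : ENNReal.ofReal ((volume D).toReal ^ invE s) * lqNorm D ⊤ u₀ = C := by
    rw [hCdef]
    congr 1
    rw [ENNReal.toReal_rpow, ENNReal.ofReal_toReal
      (ENNReal.rpow_ne_top_of_nonneg hinvs hDfin)]
  calc mixedNorm D T r s (fun t x => duhamel D G F u₀ u t x - duhamel D G_N F u₀ u t x)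
      ≤ (eLp (volume.restrict (Ioo (0:ℝ) T)) r (fun t => eLp (volume.restrict D) s (fun x => ∫⁻ y, (‖G t x y - G_N t x y‖₊ : ℝ≥0∞) * ‖u₀ y‖₊ ∂(volume.restrict D)))) + (eLp (volume.restrict (Ioo (0:ℝ) T)) r (fun t => eLp (volume.restrict D) s (fun x => ∫⁻ τ in Ioo (0:ℝ) t, ∫⁻ y, (‖G (t - τ) x y - G_N (t - τ) x y‖₊ : ℝ≥0∞) * ‖F (u τ y)‖₊ ∂(volume.restrict D)))) := step3
    _ ≤ ENNReal.ofReal ε * C + ENNReal.ofReal ε * (mixedNorm D T r s (fun t x => F (u t x))) := add_le_add step4 step5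
    _ = ENNReal.ofReal ε * (C + (mixedNorm D T r s (fun t x => F (u t x)))) := (mul_add _ _ _).symm
    _ = ENNReal.ofReal ε *
          (ENNReal.ofReal ((volume D).toReal ^ invE s) * lqNorm D ⊤ u₀ + (mixedNorm D T r s (fun t x => F (u t x)))) := by
        rw [hCeq]
end
end

section
/- (Lemma on the map Φ_{N,net} with approximate nonlinearity, self-mapping part.) Let d ≥ 1, let D ⊆ ℝ^d be a bounded measurable set with positive finite Lebesgue measure, and let T > 0, C_L > 0, R > 0, M' > 0, ε ∈ (0,1]. Let F : ℝ → ℝ satisfy |F(z)| ≤ C_F |z|^p for all z ∈ ℝ with p > 1, C_F > 0. Let F_net : ℝ → ℝ be measurable with sup_{|z| ≤ M'} |F(z) − F_net(z)| ≤ ε. Let G_N : (0,T)×D×D → ℝ be measurable with ess sup_{(t,x)∈(0,T)×D} ∫₀ᵗ ∫_D |G_N(t−τ,x,y)| dy dτ ≤ 2 C_L T and ess sup_{(t,x)∈(0,T)×D} ∫_D |G_N(t,x,y)| dy ≤ 2 C_L. Assume 2 C_L R + 2 C_L T (1 + C_F (M')^p) ≤ M'. Then for every u₀ ∈ L^∞(D)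 with ‖u₀‖_{L^∞} ≤ R and every measurable u : (0,T)×D → ℝ with ess sup_{(t,x)} |u(t,x)| ≤ M', the function Φ_{N,net,u₀}[u](t,x) := ∫_D G_N(t,x,y) u₀(y) dy + ∫₀ᵗ ∫_D G_N(t−τ,x,y) F_net(u(τ,y)) dy dτ satisfies ess sup_{(t,x)∈(0,T)×D} |Φ_{N,net,u₀}[u](t,x)| ≤ M'. -/
open MeasureTheory ENNReal Set Filter

noncomputable section

lemma ofReal_norm_eq_coe_nnnorm {E : Type*} [SeminormedAddGroup E] (a : E) :
    ENNReal.ofReal ‖a‖ = (‖a‖₊ : ℝ≥0∞) := ofReal_norm a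

/-- the map `Φ_{N,net}` with approximate nonlinearity maps the ball
`B_{L^∞(0,T;L^∞)}(M')` into itself. -/
theorem net_map_self_mapping
    {d : ℕ} (hd : 1 ≤ d) (D : Set (Esp d)) (hDmeas : MeasurableSet D)
    (hDbdd : Bornology.IsBounded D) (hDpos : 0 < volume D) (hDfin : volume D ≠ ⊤)
    (T C_L R M' C_F p ε : ℝ) (hT : 0 < T) (hCL : 0 < C_L) (hR : 0 < R) (hM' : 0 < M')
    (hCF : 0 < C_F) (hp : 1 < p) (hε : ε ∈ Ioc (0 : ℝ) 1)
    (F : ℝ → ℝ) (hF : ∀ z : ℝ, |F z| ≤ C_F * |z| ^ p)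
    (F_net : ℝ → ℝ) (hFnetm : Measurable F_net)
    (hFnet : ∀ z : ℝ, |z| ≤ M' → |F z - F_net z| ≤ ε)
    (G_N : ℝ → Esp d → Esp d → ℝ)
    (hG1 : essSup
        (fun q : ℝ × Esp d =>
          ∫⁻ τ in Ioo (0 : ℝ) q.1, ∫⁻ y in D, (‖G_N (q.1 - τ) q.2 y‖₊ : ℝ≥0∞))
        (prodTD D T) ≤ ENNReal.ofReal (2 * C_L * T))
    (hG2 : essSup (fun q : ℝ × Esp d => ∫⁻ y in D, (‖G_N q.1 q.2 y‖₊ : ℝ≥0∞)) (prodTD D T) ≤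
      ENNReal.ofReal (2 * C_L))
    (hsmall : 2 * C_L * R + 2 * C_L * T * (1 + C_F * M' ^ p) ≤ M') :
    ∀ u₀ : Esp d → ℝ, Measurable u₀ → lqNorm D ⊤ u₀ ≤ ENNReal.ofReal R →
      ∀ u : ℝ → Esp d → ℝ, Measurable (Function.uncurry u) →
        essSupNorm D T u ≤ ENNReal.ofReal M' →
        essSupNorm D T (duhamel D G_N F_net u₀ u) ≤ ENNReal.ofReal M' := by
  intro u₀ hu₀m hu₀ u hum hu
  set c : ℝ := 1 + C_F * M' ^ p with hcdef
  have hMp0 : (0:ℝ) ≤ M' ^ p := Real.rpow_nonneg hM'.le p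
  have hc0 : (0:ℝ) ≤ c := by positivity
  have hCLT0 : (0:ℝ) ≤ 2 * C_L * T := by positivity
  have hCLR0 : (0:ℝ) ≤ 2 * C_L * R := by positivity
  have hCL0 : (0:ℝ) ≤ 2 * C_L := by positivity
  -- F_net bound
  have hFb : ∀ z : ℝ, |z| ≤ M' → |F_net z| ≤ c := by
    intro z hz
    have h1 : |F_net z| ≤ |F z| + |F z - F_net z| := by
      simpa [sub_sub_cancel] using abs_sub (F z) (F z - F_net z)
    have h2 : |z| ^ p ≤ M' ^ p := Real.rpow_le_rpow (abs_nonneg z) hz (by linarith)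
    have h3 : |F z| ≤ C_F * M' ^ p := (hF z).trans (by nlinarith)
    have h4 : |F z - F_net z| ≤ 1 := (hFnet z hz).trans hε.2
    calc |F_net z| ≤ |F z| + |F z - F_net z| := h1
      _ ≤ C_F * M' ^ p + 1 := add_le_add h3 h4
      _ = c := by ring
  -- ae facts
  have h1' : ∀ᵐ q ∂(prodTD D T),
      (∫⁻ τ in Ioo (0:ℝ) q.1, ∫⁻ y in D, (‖G_N (q.1 - τ) q.2 y‖₊ : ℝ≥0∞)) ≤
        ENNReal.ofReal (2 * C_L * T) :=
    (ENNReal.ae_le_essSup _).mono fun q hq => hq.trans hG1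
  have h2' : ∀ᵐ q ∂(prodTD D T),
      (∫⁻ y in D, (‖G_N q.1 q.2 y‖₊ : ℝ≥0∞)) ≤ ENNReal.ofReal (2 * C_L) :=
    (ENNReal.ae_le_essSup _).mono fun q hq => hq.trans hG2
  have hu' : ∀ᵐ q ∂(prodTD D T), (‖u q.1 q.2‖₊ : ℝ≥0∞) ≤ ENNReal.ofReal M' :=
    (ENNReal.ae_le_essSup _).mono fun q hq => hq.trans hu
  have hu₀' : ∀ᵐ y ∂(volume.restrict D), (‖u₀ y‖₊ : ℝ≥0∞) ≤ ENNReal.ofReal R := by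
    have : essSup (fun x => (‖u₀ x‖₊ : ℝ≥0∞)) (volume.restrict D) ≤ ENNReal.ofReal R := by
      simpa [lqNorm, eLp] using hu₀
    exact (ENNReal.ae_le_essSup _).mono fun y hy => hy.trans this
  -- restrict u bound to subintervals
  rw [prodTD] at hu'
  have hut : ∀ t : ℝ, t ≤ T →
      ∀ᵐ τ ∂(volume.restrict (Ioo (0:ℝ) t)), ∀ᵐ y ∂(volume.restrict D),
        (‖u τ y‖₊ : ℝ≥0∞) ≤ ENNReal.ofReal M' := by
    intro t ht
    have hle : (volume.restrict (Ioo (0:ℝ) t)).prod (volume.restrict D) ≤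
        (volume.restrict (Ioo (0:ℝ) T)).prod (volume.restrict D) := by
      rw [Measure.prod_restrict, Measure.prod_restrict]
      exact Measure.restrict_mono
        (Set.prod_mono_left (Ioo_subset_Ioo le_rfl ht)) le_rfl
    exact Measure.ae_ae_of_ae_prod (hu'.filter_mono (ae_mono hle))
  have htm : ∀ᵐ q ∂(prodTD D T), q.1 ∈ Ioo (0:ℝ) T := by
    rw [prodTD, Filter.eventually_iff, mem_ae_iff]
    have hset : {q : ℝ × Esp d | q.1 ∈ Ioo (0:ℝ) T}ᶜ = (Ioo (0:ℝ) T)ᶜ ×ˢ (univ : Set (Esp d)) := by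
      ext q; simp
    rw [hset, Measure.prod_prod, Measure.restrict_apply measurableSet_Ioo.compl]
    simp
  -- main estimate
  rw [essSupNorm]
  refine essSup_le_of_ae_le _ ?_
  filter_upwards [h1', h2', htm] with q hq1 hq2 hqt
  obtain ⟨t, x⟩ := q
  simp only at hq1 hq2 hqt ⊢
  rw [duhamel, ← ofReal_norm_eq_coe_nnnorm]
  refine ENNReal.ofReal_le_ofReal ?_
  have hmul : ∀ a b : ℝ, ENNReal.ofReal ‖a * b‖ = (‖a‖₊ : ℝ≥0∞) * (‖b‖₊ : ℝ≥0∞) := by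
    intro a b; rw [ofReal_norm_eq_coe_nnnorm, nnnorm_mul, ENNReal.coe_mul]
  -- first term
  have hA : ‖∫ y in D, G_N t x y * u₀ y‖ ≤ 2 * C_L * R := by
    refine (norm_integral_le_lintegral_norm _).trans ?_
    refine ENNReal.toReal_le_of_le_ofReal hCLR0 ?_
    have e1 : (∫⁻ y in D, ENNReal.ofReal ‖G_N t x y * u₀ y‖) =
        ∫⁻ y in D, (‖G_N t x y‖₊ : ℝ≥0∞) * (‖u₀ y‖₊ : ℝ≥0∞) := by
      refine lintegral_congr fun y => hmul _ _
    rw [e1]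
    calc (∫⁻ y in D, (‖G_N t x y‖₊ : ℝ≥0∞) * (‖u₀ y‖₊ : ℝ≥0∞))
        ≤ ∫⁻ y in D, (‖G_N t x y‖₊ : ℝ≥0∞) * ENNReal.ofReal R :=
          lintegral_mono_ae (hu₀'.mono fun y hy => mul_le_mul_right hy _)
      _ = (∫⁻ y in D, (‖G_N t x y‖₊ : ℝ≥0∞)) * ENNReal.ofReal R :=
          lintegral_mul_const' _ _ ENNReal.ofReal_ne_top
      _ ≤ ENNReal.ofReal (2 * C_L) * ENNReal.ofReal R := mul_le_mul_left hq2 _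
      _ = ENNReal.ofReal (2 * C_L * R) := by rw [← ENNReal.ofReal_mul hCL0]
  -- second term
  have hutt := hut t hqt.2.le
  have hFnet_ae : ∀ᵐ τ ∂(volume.restrict (Ioo (0:ℝ) t)), ∀ᵐ y ∂(volume.restrict D),
      (‖F_net (u τ y)‖₊ : ℝ≥0∞) ≤ ENNReal.ofReal c := by
    refine hutt.mono fun τ hτ => hτ.mono fun y hy => ?_
    rw [← ofReal_norm_eq_coe_nnnorm] at hy ⊢
    rw [ENNReal.ofReal_le_ofReal_iff hM'.le] at hy
    refine ENNReal.ofReal_le_ofReal ?_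
    exact hFb _ (by simpa [Real.norm_eq_abs] using hy)
  have hB : ‖∫ τ in Ioo (0:ℝ) t, ∫ y in D, G_N (t - τ) x y * F_net (u τ y)‖ ≤
      2 * C_L * T * c := by
    refine (norm_integral_le_lintegral_norm _).trans ?_
    refine ENNReal.toReal_le_of_le_ofReal (by positivity) ?_
    calc (∫⁻ τ in Ioo (0:ℝ) t, ENNReal.ofReal ‖∫ y in D, G_N (t - τ) x y * F_net (u τ y)‖)
        ≤ ∫⁻ τ in Ioo (0:ℝ) t, ∫⁻ y in D, (‖G_N (t - τ) x y * F_net (u τ y)‖₊ : ℝ≥0∞) := by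
          refine lintegral_mono fun τ => ?_
          rw [ofReal_norm_eq_coe_nnnorm]
          exact enorm_integral_le_lintegral_enorm _
      _ = ∫⁻ τ in Ioo (0:ℝ) t, ∫⁻ y in D,
            (‖G_N (t - τ) x y‖₊ : ℝ≥0∞) * (‖F_net (u τ y)‖₊ : ℝ≥0∞) := by
          refine lintegral_congr fun τ => lintegral_congr fun y => ?_
          rw [nnnorm_mul, ENNReal.coe_mul]
      _ ≤ ∫⁻ τ in Ioo (0:ℝ) t, ∫⁻ y in D,
            (‖G_N (t - τ) x y‖₊ : ℝ≥0∞) * ENNReal.ofReal c := by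
          refine lintegral_mono_ae (hFnet_ae.mono fun τ hτ => ?_)
          exact lintegral_mono_ae (hτ.mono fun y hy => mul_le_mul_right hy _)
      _ = (∫⁻ τ in Ioo (0:ℝ) t, ∫⁻ y in D, (‖G_N (t - τ) x y‖₊ : ℝ≥0∞)) *
            ENNReal.ofReal c := by
          rw [← lintegral_mul_const' _ _ ENNReal.ofReal_ne_top]
          refine lintegral_congr fun τ => lintegral_mul_const' _ _ ENNReal.ofReal_ne_top
      _ ≤ ENNReal.ofReal (2 * C_L * T) * ENNReal.ofReal c := mul_le_mul_left hq1 _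
      _ = ENNReal.ofReal (2 * C_L * T * c) := by rw [← ENNReal.ofReal_mul hCLT0]
  calc ‖(∫ y in D, G_N t x y * u₀ y) +
        ∫ τ in Ioo (0:ℝ) t, ∫ y in D, G_N (t - τ) x y * F_net (u τ y)‖
      ≤ ‖∫ y in D, G_N t x y * u₀ y‖ +
        ‖∫ τ in Ioo (0:ℝ) t, ∫ y in D, G_N (t - τ) x y * F_net (u τ y)‖ := norm_add_le _ _
    _ ≤ 2 * C_L * R + 2 * C_L * T * c := add_le_add hA hB
    _ ≤ M' := hsmall
end
end

section
/- (Quantitative approximation of the solution by approximate Picard iteration, kernel form of the main theorem.) Let d ≥ 1, let D ⊆ ℝ^d be a bounded measurable set with positive finite Lebesgue measure |D|, and let T ∈ (0,1], R, M, M' > 0, δ ∈ (0,1), ε ∈ (0,1). Let r, s ∈ [1,∞] with Hölder conjugates r', s'. Let F : ℝ → ℝ satisfy |F(z)| ≤ C_F |z|^p for all z (p > 1, C_F > 0), let F_net : ℝ → ℝ be measurable with sup_{|z| ≤ M'} |F(z) − F_net(z)| ≤ ε, and let G, G_N : (0,T)×D×D → ℝ be measurable kernels. Let u₀ ∈ L^∞(D)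 with ‖u₀‖_{L^∞} ≤ R, and assume: (a) the Duhamel map Φ_{u₀} with kernel G and nonlinearity F maps B_{L^r(0,T;L^s)}(M) into itself, is a δ-contraction for the L^r(0,T;L^s) norm there, and has fixed point u in this ball; (b) Φ_{N,net,u₀}, the map with kernel G_N and nonlinearity F_net, maps B_{L^∞(0,T;L^∞)}(M') into itself; (c) T^{1/r} |D|^{1/s} M' ≤ M (so B_{L^∞(0,T;L^∞)}(M') ⊆ B_{L^r(0,T;L^s)}(M)); (d) there is a constant c > 0 such that ‖Φ_{u₀}[v] − Φ_{N,net,u₀}[v]‖_{L^r(0,T;L^s)} ≤ c ε for every v ∈ B_{L^∞(0,T;L^∞)}(M'). Set J := ⌈log(1/ε)/log(1/δ)⌉. Then ‖u − Φ_{N,net,u₀}^{[J]}[0]‖_{L^r(0,T;L^s)} ≤ (M + c/(1 − δ)) ε. -/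
open MeasureTheory ENNReal Set Filter

noncomputable section

section Aux

variable {α : Type*} [MeasurableSpace α] {μ : Measure α}

lemma eLp_mono {q : ℝ≥0∞} {f g : α → ℝ≥0∞} (h : ∀ᵐ a ∂μ, f a ≤ g a) :
    eLp μ q f ≤ eLp μ q g := by
  unfold eLp
  split_ifs
  · exact essSup_mono_ae h
  · exact ENNReal.rpow_le_rpow
      (lintegral_mono_ae (h.mono fun a ha => ENNReal.rpow_le_rpow ha ENNReal.toReal_nonneg))
      (by positivity)

lemma eLp_congr {q : ℝ≥0∞} {f g : α → ℝ≥0∞} (h : f =ᵐ[μ] g) : eLp μ q f = eLp μ q g := by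
  unfold eLp
  split_ifs
  · exact essSup_congr_ae h
  · rw [lintegral_congr_ae (h.mono fun a ha => by rw [ha])]

lemma eLp_le_of_ae_le {q : ℝ≥0∞} (hq : 1 ≤ q) {f : α → ℝ≥0∞} {C : ℝ≥0∞}
    (h : ∀ᵐ a ∂μ, f a ≤ C) :
    eLp μ q f ≤ C * μ Set.univ ^ invE q := by
  have hq0 : q ≠ 0 := (zero_lt_one.trans_le hq).ne'
  unfold eLp invE
  split_ifs with ht
  · have h0 : ((1:ℝ≥0∞)/q).toReal = 0 := by simp [ht]
    rw [h0, ENNReal.rpow_zero, mul_one]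
    exact essSup_le_of_ae_le _ h
  · have hp : 0 < q.toReal := ENNReal.toReal_pos hq0 ht
    have h1 : (1 : ℝ≥0∞) / q = q⁻¹ := one_div q
    calc (∫⁻ a, f a ^ q.toReal ∂μ) ^ (1 / q.toReal)
        ≤ (∫⁻ _, C ^ q.toReal ∂μ) ^ (1 / q.toReal) :=
          ENNReal.rpow_le_rpow
            (lintegral_mono_ae (h.mono fun a ha => ENNReal.rpow_le_rpow ha hp.le)) (by positivity)
      _ = (C ^ q.toReal) ^ (1 / q.toReal) * μ Set.univ ^ (1 / q.toReal) := by
          rw [lintegral_const, ENNReal.mul_rpow_of_nonneg _ _ (by positivity)]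
      _ = C * μ Set.univ ^ ((1 : ℝ≥0∞) / q).toReal := by
          rw [← ENNReal.rpow_mul, mul_one_div, div_self hp.ne', ENNReal.rpow_one, h1,
            ENNReal.toReal_inv, one_div]

lemma essSup_eq_iSup_rat (g : α → ℝ≥0∞) :
    essSup g μ = ⨆ q : ℚ,
      if μ {x | (Real.toNNReal q : ℝ≥0∞) < g x} ≠ 0 then (Real.toNNReal q : ℝ≥0∞) else 0 := by
  set S := ⨆ q : ℚ,
      if μ {x | (Real.toNNReal q : ℝ≥0∞) < g x} ≠ 0 then (Real.toNNReal q : ℝ≥0∞) else 0 with hS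
  apply le_antisymm
  · set A : Set ℚ := {q : ℚ | μ {x | (Real.toNNReal q : ℝ≥0∞) < g x} = 0} with hA
    have hN : μ (⋃ q ∈ A, {x | (Real.toNNReal q : ℝ≥0∞) < g x}) = 0 :=
      (measure_biUnion_null_iff A.to_countable).2 fun q hq => hq
    refine essSup_le_of_ae_le _ ?_
    filter_upwards [measure_eq_zero_iff_ae_notMem.mp hN] with x hx
    by_contra hlt
    push_neg at hlt
    obtain ⟨q, hq0, h1, h2⟩ := ENNReal.lt_iff_exists_rat_btwn.mp hlt
    by_cases hz : μ {x | (Real.toNNReal q : ℝ≥0∞) < g x} = 0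
    · exact hx (Set.mem_biUnion hz h2)
    · have hle : (if μ {x | (Real.toNNReal q : ℝ≥0∞) < g x} ≠ 0
          then (Real.toNNReal q : ℝ≥0∞) else 0) ≤ S :=
        le_iSup (fun q : ℚ => if μ {x | (Real.toNNReal q : ℝ≥0∞) < g x} ≠ 0
          then (Real.toNNReal q : ℝ≥0∞) else 0) q
      rw [if_pos hz] at hle
      exact absurd hle (not_le.mpr h1)
  · refine iSup_le fun q => ?_
    by_cases hz : μ {x | (Real.toNNReal q : ℝ≥0∞) < g x} = 0
    · simp [hz]
    · rw [if_pos hz]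
      by_contra hlt
      push_neg at hlt
      refine hz (measure_mono_null ?_ (meas_essSup_lt (f := g) (μ := μ)))
      exact fun x hx => lt_trans hlt hx

end Aux
section Aux2

variable {α : Type*} [MeasurableSpace α]

lemma measurable_eLp_comp {β : Type*} [MeasurableSpace β] {ν : Measure β} [SFinite ν]
    (q : ℝ≥0∞) {v : α → β → ℝ} (hv : Measurable (Function.uncurry v)) :
    Measurable fun t => eLp ν q (fun x => (‖v t x‖₊ : ℝ≥0∞)) := by
  rcases eq_or_ne q ⊤ with rfl | hq
  · simp only [eLp, eq_self_iff_true, if_true]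
    have hrep : (fun t => essSup (fun x => (‖v t x‖₊ : ℝ≥0∞)) ν) =
        fun t => ⨆ p : ℚ,
          if ν {x | (Real.toNNReal p : ℝ≥0∞) < (‖v t x‖₊ : ℝ≥0∞)} ≠ 0
          then (Real.toNNReal p : ℝ≥0∞) else 0 :=
      funext fun t => essSup_eq_iSup_rat _
    rw [hrep]
    refine Measurable.iSup fun p => ?_
    have hs : MeasurableSet {z : α × β | (Real.toNNReal p : ℝ≥0∞) < (‖v z.1 z.2‖₊ : ℝ≥0∞)} :=
      measurableSet_lt measurable_const hv.nnnorm.coe_nnreal_ennreal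
    have hms : Measurable fun t => ν {x | (Real.toNNReal p : ℝ≥0∞) < (‖v t x‖₊ : ℝ≥0∞)} :=
      measurable_measure_prodMk_left (ν := ν) hs
    exact Measurable.ite (hms ((measurableSet_singleton 0).compl)) measurable_const
      measurable_const
  · simp only [eLp, if_neg hq]
    refine Measurable.pow_const ?_ _
    exact Measurable.lintegral_prod_right' (hv.nnnorm.coe_nnreal_ennreal.pow_const _)

variable {d : ℕ} {D : Set (Esp d)} {T : ℝ}

lemma measurable_lqNorm (s : ℝ≥0∞) {v : ℝ → Esp d → ℝ}
    (hv : Measurable (Function.uncurry v)) :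
    Measurable fun t => lqNorm D s (v t) :=
  measurable_eLp_comp s hv

lemma mixedNorm_congr_ae {r s : ℝ≥0∞} {a b : ℝ → Esp d → ℝ}
    (h : ∀ᵐ t ∂(volume.restrict (Ioo (0:ℝ) T)), ∀ᵐ x ∂(volume.restrict D), a t x = b t x) :
    mixedNorm D T r s a = mixedNorm D T r s b := by
  unfold mixedNorm
  refine eLp_congr ?_
  filter_upwards [h] with t ht
  unfold lqNorm
  exact eLp_congr (ht.mono fun x hx => by simp only [hx])

lemma mixedNorm_triangle {r s : ℝ≥0∞} (hr : 1 ≤ r) (hs : 1 ≤ s)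
    {v₁ v₂ v₃ : ℝ → Esp d → ℝ}
    (h₁ : Measurable (Function.uncurry v₁)) (h₂ : Measurable (Function.uncurry v₂))
    (h₃ : Measurable (Function.uncurry v₃)) :
    mixedNorm D T r s (fun t x => v₁ t x - v₃ t x) ≤
      mixedNorm D T r s (fun t x => v₁ t x - v₂ t x) +
        mixedNorm D T r s (fun t x => v₂ t x - v₃ t x) := by
  have h12 : Measurable (Function.uncurry fun t x => v₁ t x - v₂ t x) := h₁.sub h₂
  have h23 : Measurable (Function.uncurry fun t x => v₂ t x - v₃ t x) := h₂.sub h₃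
  have key : ∀ t, lqNorm D s (fun x => v₁ t x - v₃ t x) ≤
      lqNorm D s (fun x => v₁ t x - v₂ t x) + lqNorm D s (fun x => v₂ t x - v₃ t x) := by
    intro t
    unfold lqNorm
    refine le_trans (eLp_mono (ae_of_all _ fun x => ?_)) (eLp_add_le hs ?_ ?_)
    · show ((‖v₁ t x - v₃ t x‖₊ : ℝ≥0∞)) ≤
          (‖v₁ t x - v₂ t x‖₊ : ℝ≥0∞) + (‖v₂ t x - v₃ t x‖₊ : ℝ≥0∞)
      have hh : v₁ t x - v₃ t x = (v₁ t x - v₂ t x) + (v₂ t x - v₃ t x) := by ring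
      rw [hh]
      exact_mod_cast nnnorm_add_le _ _
    · exact (Measurable.of_uncurry_left (f := fun t x => v₁ t x - v₂ t x) h12).nnnorm.coe_nnreal_ennreal.aemeasurable
    · exact (Measurable.of_uncurry_left (f := fun t x => v₂ t x - v₃ t x) h23).nnnorm.coe_nnreal_ennreal.aemeasurable
  unfold mixedNorm
  refine le_trans (eLp_mono (ae_of_all _ key)) (eLp_add_le hr ?_ ?_)
  · exact (measurable_lqNorm s h12).aemeasurable
  · exact (measurable_lqNorm s h23).aemeasurable

lemma mixedNorm_le_of_essSup {r s : ℝ≥0∞} (hr : 1 ≤ r) (hs : 1 ≤ s)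
    (hT : 0 < T) (hDpos : 0 < volume D) (hDfin : volume D ≠ ⊤)
    {v : ℝ → Esp d → ℝ} {M' : ℝ} (hM' : 0 < M')
    (hb : essSupNorm D T v ≤ ENNReal.ofReal M') :
    mixedNorm D T r s v ≤
      ENNReal.ofReal (T ^ invE r * (volume D).toReal ^ invE s * M') := by
  have hae : ∀ᵐ z ∂prodTD D T, (‖v z.1 z.2‖₊ : ℝ≥0∞) ≤ ENNReal.ofReal M' := by
    filter_upwards [ae_le_essSup (μ := prodTD D T) fun z : ℝ × Esp d => (‖v z.1 z.2‖₊ : ℝ≥0∞)]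
      with z hz using hz.trans hb
  have h2 : ∀ᵐ t ∂(volume.restrict (Ioo (0:ℝ) T)), ∀ᵐ x ∂(volume.restrict D),
      (‖v t x‖₊ : ℝ≥0∞) ≤ ENNReal.ofReal M' :=
    Measure.ae_ae_of_ae_prod hae
  have hin : ∀ᵐ t ∂(volume.restrict (Ioo (0:ℝ) T)),
      lqNorm D s (v t) ≤ ENNReal.ofReal M' * (volume D) ^ invE s := by
    filter_upwards [h2] with t ht
    have := eLp_le_of_ae_le (μ := volume.restrict D) hs ht
    rwa [Measure.restrict_apply_univ] at this
  have hout := (eLp_mono hin).trans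
    (eLp_le_of_ae_le (μ := volume.restrict (Ioo (0:ℝ) T)) hr
      (ae_of_all _ fun _ => le_rfl))
  have hTvol : (volume.restrict (Ioo (0:ℝ) T)) Set.univ = ENNReal.ofReal T := by
    rw [Measure.restrict_apply_univ, Real.volume_Ioo, sub_zero]
  rw [hTvol] at hout
  refine le_trans hout (le_of_eq ?_)
  have hDT : (0:ℝ) < (volume D).toReal := ENNReal.toReal_pos hDpos.ne' hDfin
  have hD : volume D = ENNReal.ofReal ((volume D).toReal) := (ENNReal.ofReal_toReal hDfin).symm
  rw [hD, ENNReal.ofReal_rpow_of_pos hDT, ENNReal.ofReal_rpow_of_pos hT,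
    ← ENNReal.ofReal_mul hM'.le, ← ENNReal.ofReal_mul (by positivity),
    ENNReal.toReal_ofReal hDT.le]
  congr 1
  ring

end Aux2
section Aux3

lemma pow_le_of_ceil_log {δ ε : ℝ} (hδ : δ ∈ Ioo (0:ℝ) 1) (hε : ε ∈ Ioo (0:ℝ) 1)
    {J : ℕ} (hJ : J = ⌈Real.log (1/ε) / Real.log (1/δ)⌉₊) : δ ^ J ≤ ε := by
  have hld : 0 < Real.log (1/δ) := Real.log_pos (one_lt_one_div hδ.1 hδ.2)
  have h1 : Real.log (1/ε) / Real.log (1/δ) ≤ (J : ℝ) := hJ ▸ Nat.le_ceil _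
  have h2 : Real.log (1/ε) ≤ (J : ℝ) * Real.log (1/δ) := by
    have := (div_le_iff₀ hld).mp h1
    linarith
  rw [one_div, one_div, Real.log_inv, Real.log_inv] at h2
  have h3 : Real.log (δ ^ J) ≤ Real.log ε := by
    rw [Real.log_pow]
    nlinarith
  exact (Real.log_le_log_iff (pow_pos hδ.1 J) hε.1).mp h3

lemma geom_sum_le_inv_sub {δ : ℝ} (hδ : δ ∈ Ioo (0:ℝ) 1) (J : ℕ) :
    ∑ i ∈ Finset.range J, δ ^ i ≤ 1 / (1 - δ) := by
  have h1 : (0:ℝ) < 1 - δ := by linarith [hδ.2]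
  rw [le_div_iff₀ h1]
  have hg := geom_sum_mul δ J
  nlinarith [pow_nonneg hδ.1.le J]

end Aux3
/-- quantitative approximation of the solution by the approximate Picard
iteration (kernel form of the main theorem). -/
theorem quantitative_approximation_by_approximate_picard
    {d : ℕ} (hd : 1 ≤ d) (D : Set (Esp d)) (hDmeas : MeasurableSet D)
    (hDbdd : Bornology.IsBounded D) (hDpos : 0 < volume D) (hDfin : volume D ≠ ⊤)
    (T R M M' δ ε : ℝ) (hT : T ∈ Ioc (0 : ℝ) 1) (hR : 0 < R) (hM : 0 < M) (hM' : 0 < M')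
    (hδ : δ ∈ Ioo (0 : ℝ) 1) (hε : ε ∈ Ioo (0 : ℝ) 1)
    (r s r' s' : ℝ≥0∞) (hr : 1 ≤ r) (hs : 1 ≤ s)
    (hr' : 1 / r + 1 / r' = 1) (hs' : 1 / s + 1 / s' = 1)
    (F F_net : ℝ → ℝ) (C_F p : ℝ) (hCF : 0 < C_F) (hp : 1 < p)
    (hF : ∀ z : ℝ, |F z| ≤ C_F * |z| ^ p)
    (hFnetm : Measurable F_net) (hFnet : ∀ z : ℝ, |z| ≤ M' → |F z - F_net z| ≤ ε)
    (G G_N : ℝ → Esp d → Esp d → ℝ)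
    (hGm : Measurable fun q : ℝ × Esp d × Esp d => G q.1 q.2.1 q.2.2)
    (hGNm : Measurable fun q : ℝ × Esp d × Esp d => G_N q.1 q.2.1 q.2.2)
    (u₀ : Esp d → ℝ) (hu₀m : Measurable u₀) (hu₀R : lqNorm D ⊤ u₀ ≤ ENNReal.ofReal R)
    -- (a) `Φ_{u₀}` maps `B_{L^r L^s}(M)` into itself and is a `δ`-contraction there
    (hself : ∀ v : ℝ → Esp d → ℝ, Measurable (Function.uncurry v) →
      mixedNorm D T r s v ≤ ENNReal.ofReal M →
      Measurable (Function.uncurry (duhamel D G F u₀ v)) ∧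
        mixedNorm D T r s (duhamel D G F u₀ v) ≤ ENNReal.ofReal M)
    (hcontr : ∀ v₁ v₂ : ℝ → Esp d → ℝ,
      Measurable (Function.uncurry v₁) → Measurable (Function.uncurry v₂) →
      mixedNorm D T r s v₁ ≤ ENNReal.ofReal M → mixedNorm D T r s v₂ ≤ ENNReal.ofReal M →
      mixedNorm D T r s (fun t x => duhamel D G F u₀ v₁ t x - duhamel D G F u₀ v₂ t x) ≤
        ENNReal.ofReal δ * mixedNorm D T r s (fun t x => v₁ t x - v₂ t x))
    -- ... with fixed point `u` in that ball
    (u : ℝ → Esp d → ℝ) (hum : Measurable (Function.uncurry u))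
    (huM : mixedNorm D T r s u ≤ ENNReal.ofReal M)
    (hufix : ∀ᵐ q ∂prodTD D T, u q.1 q.2 = duhamel D G F u₀ u q.1 q.2)
    -- (b) `Φ_{N,net,u₀}` maps `B_{L^∞ L^∞}(M')` into itself
    (hselfnet : ∀ v : ℝ → Esp d → ℝ, Measurable (Function.uncurry v) →
      essSupNorm D T v ≤ ENNReal.ofReal M' →
      Measurable (Function.uncurry (duhamel D G_N F_net u₀ v)) ∧
        essSupNorm D T (duhamel D G_N F_net u₀ v) ≤ ENNReal.ofReal M')
    -- (c) the `L^∞` ball embeds in the `L^r L^s` ball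
    (hcap : T ^ invE r * (volume D).toReal ^ invE s * M' ≤ M)
    -- (d) the two maps are `c ε`-close on the `L^∞` ball
    (c : ℝ) (hc : 0 < c)
    (hclose : ∀ v : ℝ → Esp d → ℝ, Measurable (Function.uncurry v) →
      essSupNorm D T v ≤ ENNReal.ofReal M' →
      mixedNorm D T r s
          (fun t x => duhamel D G F u₀ v t x - duhamel D G_N F_net u₀ v t x) ≤
        ENNReal.ofReal (c * ε))
    (J : ℕ) (hJ : J = ⌈Real.log (1 / ε) / Real.log (1 / δ)⌉₊) :
    mixedNorm D T r s
        (fun t x => u t x - (duhamel D G_N F_net u₀)^[J] (fun _ _ => 0) t x) ≤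
      ENNReal.ofReal ((M + c / (1 - δ)) * ε) := by

  -- the Picard iterates of the network map
  set Ψ := duhamel D G_N F_net u₀ with hΨ
  set Φ := duhamel D G F u₀ with hΦ
  set w : ℕ → ℝ → Esp d → ℝ := fun j => Ψ^[j] (fun _ _ => 0) with hw
  -- the iterates stay in the L^∞ ball
  have hwb : ∀ j, Measurable (Function.uncurry (w j)) ∧ essSupNorm D T (w j) ≤
      ENNReal.ofReal M' := by
    intro j
    induction j with
    | zero =>
      constructor
      · show Measurable (Function.uncurry (fun _ _ => (0:ℝ)))
        exact measurable_const
      · refine essSup_le_of_ae_le _ (ae_of_all _ fun z => ?_)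
        show ((‖(0:ℝ)‖₊ : ℝ≥0∞)) ≤ ENNReal.ofReal M'
        simp
    | succ j ih =>
      have : w (j+1) = Ψ (w j) := Function.iterate_succ_apply' Ψ j _
      rw [this]
      exact hselfnet (w j) ih.1 ih.2
  -- the iterates are in the L^r L^s ball of radius M
  have hwM : ∀ j, mixedNorm D T r s (w j) ≤ ENNReal.ofReal M := fun j =>
    le_trans (mixedNorm_le_of_essSup hr hs hT.1 hDpos hDfin hM' (hwb j).2)
      (ENNReal.ofReal_le_ofReal hcap)
  -- main induction
  have key : ∀ j, mixedNorm D T r s (fun t x => u t x - w j t x) ≤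
      ENNReal.ofReal (δ ^ j * M + c * ε * ∑ i ∈ Finset.range j, δ ^ i) := by
    intro j
    induction j with
    | zero =>
      have h0 : w 0 = fun _ _ => (0:ℝ) := rfl
      rw [h0]
      simp only [sub_zero, pow_zero, one_mul,
        Finset.range_zero, Finset.sum_empty, mul_zero, add_zero]
      exact huM
    | succ j ih =>
      have hSig : (0:ℝ) ≤ ∑ i ∈ Finset.range j, δ ^ i :=
        Finset.sum_nonneg fun i _ => pow_nonneg hδ.1.le i
      have hprev : (0:ℝ) ≤ δ ^ j * M + c * ε * ∑ i ∈ Finset.range j, δ ^ i :=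
        add_nonneg (mul_nonneg (pow_nonneg hδ.1.le j) hM.le)
          (mul_nonneg (mul_nonneg hc.le hε.1.le) hSig)
      have hΦu := hself u hum huM
      have hΦw := hself (w j) (hwb j).1 (hwM j)
      have hΨw := hselfnet (w j) (hwb j).1 (hwb j).2
      have hsucc : w (j+1) = Ψ (w j) := Function.iterate_succ_apply' Ψ j _
      have hcongr : mixedNorm D T r s (fun t x => u t x - w (j+1) t x) =
          mixedNorm D T r s (fun t x => Φ u t x - Ψ (w j) t x) := by
        rw [hsucc]
        apply mixedNorm_congr_ae
        have h2 := Measure.ae_ae_of_ae_prod hufix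
        filter_upwards [h2] with t ht
        filter_upwards [ht] with x hx
        rw [hx]
      have htri := mixedNorm_triangle (D := D) (T := T) (v₁ := Φ u) (v₂ := Φ (w j)) (v₃ := Ψ (w j))
        hr hs hΦu.1 hΦw.1 hΨw.1
      have hc1 := hcontr u (w j) hum (hwb j).1 huM (hwM j)
      have hc2 := hclose (w j) (hwb j).1 (hwb j).2
      calc mixedNorm D T r s (fun t x => u t x - w (j+1) t x)
          = mixedNorm D T r s (fun t x => Φ u t x - Ψ (w j) t x) := hcongr
        _ ≤ mixedNorm D T r s (fun t x => Φ u t x - Φ (w j) t x) +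
              mixedNorm D T r s (fun t x => Φ (w j) t x - Ψ (w j) t x) := htri
        _ ≤ ENNReal.ofReal δ * mixedNorm D T r s (fun t x => u t x - w j t x) +
              ENNReal.ofReal (c * ε) := add_le_add hc1 hc2
        _ ≤ ENNReal.ofReal δ *
              ENNReal.ofReal (δ ^ j * M + c * ε * ∑ i ∈ Finset.range j, δ ^ i) +
              ENNReal.ofReal (c * ε) := add_le_add (mul_le_mul_right ih _) le_rfl
        _ = ENNReal.ofReal (δ ^ (j+1) * M + c * ε * ∑ i ∈ Finset.range (j+1), δ ^ i) := by
            rw [← ENNReal.ofReal_mul hδ.1.le,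
              ← ENNReal.ofReal_add (mul_nonneg hδ.1.le hprev) (mul_nonneg hc.le hε.1.le)]
            congr 1
            rw [geom_sum_succ]
            ring
  -- conclusion
  have final := key J
  simp only [hw] at final
  refine le_trans final (ENNReal.ofReal_le_ofReal ?_)
  have hδJ : δ ^ J ≤ ε := pow_le_of_ceil_log hδ hε hJ
  have hSigle : ∑ i ∈ Finset.range J, δ ^ i ≤ 1 / (1 - δ) := geom_sum_le_inv_sub hδ J
  have h1δ : (0:ℝ) < 1 - δ := by linarith [hδ.2]
  have hce : (0:ℝ) ≤ c * ε := mul_nonneg hc.le hε.1.le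
  have h2 : c * ε * ∑ i ∈ Finset.range J, δ ^ i ≤ c * ε * (1 / (1 - δ)) :=
    mul_le_mul_of_nonneg_left hSigle hce
  have h3 : δ ^ J * M ≤ ε * M := mul_le_mul_of_nonneg_right hδJ hM.le
  have h4 : c * ε * (1 / (1 - δ)) = c / (1 - δ) * ε := by ring
  nlinarith
end
end

section
/- (Gaussian kernels satisfy the mixed-norm finiteness conditions.) Let d ≥ 1, let D ⊆ ℝ^d be a bounded measurable set with positive finite Lebesgue measure, let T ∈ (0,1], and let G : (0,T]×D×D → ℝ be measurable with |G(t,x,y)| ≤ C t^{−d/2} exp(−|x−y|²/(C' t)) for all t ∈ (0,T] and almost every x, y ∈ D, for some constants C, C' > 0. Let r, s ∈ (1,∞) with Hölder conjugates r', s', and assume d/s + 2/r < 2 and d/s < 2/r. Then both mixed norms are finite: ‖ ‖G(t−τ,x,y)‖_{L^{r'}_τ(0,t;L^{s'}_y)} ‖_{L^r_t(0,T;L^s_x)} < ∞ and ‖ ‖G(t,x,·)‖_{L^{s'}_y(D)} ‖_{L^r_t(0,T;L^s_x)} < ∞. -/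
open MeasureTheory ENNReal Set Filter

noncomputable section

/-- Auxiliary: integrability of the Gaussian on `ℝ^d`. -/
lemma aux_gauss_integrable {d : ℕ} {c : ℝ} (hc : 0 < c) :
    Integrable (fun v : Esp d => Real.exp (-(c * ‖v‖ ^ 2))) := by
  have h := (GaussianFourier.integrable_cexp_neg_mul_sq_norm_add
      (b := (c : ℂ)) (by simpa using hc) 0 (0 : Esp d)).norm
  refine h.congr (Filter.Eventually.of_forall fun v => ?_)
  have e : (-(c:ℂ) * (‖v‖:ℂ) ^ 2 + 0 * ((inner ℝ (0 : Esp d) v : ℝ) : ℂ))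
      = ((-(c * ‖v‖ ^ 2) : ℝ) : ℂ) := by push_cast; ring
  simp only [Complex.norm_exp, e, Complex.ofReal_re]

/-- Auxiliary: the Gaussian integral on `ℝ^d`. -/
lemma aux_gauss_integral {d : ℕ} {c : ℝ} (hc : 0 < c) :
    ∫ v : Esp d, Real.exp (-(c * ‖v‖ ^ 2)) = (Real.pi / c) ^ ((d : ℝ) / 2) := by
  have := GaussianFourier.integral_rexp_neg_mul_sq_norm (V := Esp d) hc
  simpa [neg_mul, finrank_euclideanSpace_fin] using this

/-- Auxiliary: Gaussian lower Lebesgue integral bound over a set. -/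
lemma aux_gauss_lintegral_le {d : ℕ} (D : Set (Esp d)) {c : ℝ} (hc : 0 < c) (x : Esp d) :
    ∫⁻ y in D, ENNReal.ofReal (Real.exp (-(c * dist x y ^ 2))) ≤
      ENNReal.ofReal ((Real.pi / c) ^ ((d : ℝ) / 2)) := by
  have hmeas : Measurable (fun v : Esp d => ENNReal.ofReal (Real.exp (-(c * ‖v‖ ^ 2)))) := by
    fun_prop
  calc ∫⁻ y in D, ENNReal.ofReal (Real.exp (-(c * dist x y ^ 2)))
      ≤ ∫⁻ y, ENNReal.ofReal (Real.exp (-(c * dist x y ^ 2))) :=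
        lintegral_mono_set (subset_univ D) |>.trans_eq (by rw [Measure.restrict_univ])
    _ = ∫⁻ y, ENNReal.ofReal (Real.exp (-(c * ‖y‖ ^ 2))) := by
        simp_rw [dist_eq_norm]
        exact (Measure.measurePreserving_sub_left volume x).lintegral_comp hmeas
    _ = ENNReal.ofReal ((Real.pi / c) ^ ((d : ℝ) / 2)) := by
        rw [← aux_gauss_integral hc, ofReal_integral_eq_lintegral_ofReal (aux_gauss_integrable hc)
          (Filter.Eventually.of_forall fun v => (Real.exp_pos _).le)]

lemma aux_eLp_ofReal {α : Type*} [MeasurableSpace α] (μ : Measure α) {p : ℝ} (hp : 0 < p)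
    (f : α → ℝ≥0∞) : eLp μ (ENNReal.ofReal p) f = (∫⁻ a, f a ^ p ∂μ) ^ (1 / p) := by
  rw [eLp, if_neg ENNReal.ofReal_ne_top, ENNReal.toReal_ofReal hp.le]

lemma aux_eLp_mono_ae {α : Type*} [MeasurableSpace α] {μ : Measure α} {q : ℝ≥0∞}
    {f g : α → ℝ≥0∞} (h : f ≤ᵐ[μ] g) : eLp μ q f ≤ eLp μ q g := by
  rw [eLp, eLp]
  split
  · exact essSup_mono_ae h
  · refine ENNReal.rpow_le_rpow (lintegral_mono_ae (h.mono fun a ha => ?_)) (by positivity)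
    exact ENNReal.rpow_le_rpow ha ENNReal.toReal_nonneg

lemma aux_eLp_const {α : Type*} [MeasurableSpace α] (μ : Measure α) {p : ℝ} (hp : 0 < p)
    (c : ℝ≥0∞) : eLp μ (ENNReal.ofReal p) (fun _ => c) = c * (μ univ) ^ (1 / p) := by
  rw [aux_eLp_ofReal μ hp, lintegral_const, ENNReal.mul_rpow_of_nonneg _ _ (by positivity),
    ← ENNReal.rpow_mul, mul_one_div_cancel hp.ne', ENNReal.rpow_one]

lemma aux_lint_rpow_lt_top {T p : ℝ} (hT : 0 < T) (hp : -1 < p) :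
    ∫⁻ u in Ioo (0:ℝ) T, ENNReal.ofReal (u ^ p) < ⊤ := by
  have h := (intervalIntegral.integrableOn_Ioo_rpow_iff hT).mpr hp
  refine lt_of_le_of_lt (lintegral_mono fun u => ?_) h.2
  rw [Real.enorm_eq_ofReal_abs]
  exact ENNReal.ofReal_le_ofReal (le_abs_self _)

/-- Auxiliary: one-time `L^σ` bound for a Gaussian-dominated function. -/
lemma aux_step1 {d : ℕ} {D : Set (Esp d)} {g : Esp d → ℝ} {C C' t σ : ℝ}
    (hC : 0 < C) (hC' : 0 < C') (ht : 0 < t) (hσ : 0 < σ) (x : Esp d)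
    (hg : ∀ᵐ y ∂volume.restrict D,
      |g y| ≤ C * t ^ (-(d : ℝ) / 2) * Real.exp (-(dist x y) ^ 2 / (C' * t))) :
    (∫⁻ y in D, (‖g y‖₊ : ℝ≥0∞) ^ σ) ^ (1/σ) ≤
      ENNReal.ofReal (C * (Real.pi * C' / σ) ^ ((d:ℝ)/(2*σ)) * t ^ (-(d:ℝ)/2 + (d:ℝ)/(2*σ))) := by
  set a : ℝ := C * t ^ (-(d : ℝ) / 2) with ha
  have ha0 : 0 ≤ a := by positivity
  set c : ℝ := σ / (C' * t) with hcdef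
  have hc : 0 < c := by positivity
  have key : ∫⁻ y in D, (‖g y‖₊ : ℝ≥0∞) ^ σ ≤
      ENNReal.ofReal (a ^ σ) * ENNReal.ofReal ((Real.pi / c) ^ ((d : ℝ) / 2)) := by
    have hpt : ∀ᵐ y ∂volume.restrict D, (‖g y‖₊ : ℝ≥0∞) ^ σ ≤
        ENNReal.ofReal (a ^ σ) * ENNReal.ofReal (Real.exp (-(c * dist x y ^ 2))) := by
      filter_upwards [hg] with y hy
      rw [← enorm_eq_nnnorm, Real.enorm_eq_ofReal_abs, ENNReal.ofReal_rpow_of_nonneg (abs_nonneg _) hσ.le,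
        ← ENNReal.ofReal_mul (by positivity)]
      apply ENNReal.ofReal_le_ofReal
      calc |g y| ^ σ ≤ (a * Real.exp (-(dist x y) ^ 2 / (C' * t))) ^ σ :=
            Real.rpow_le_rpow (abs_nonneg _) hy hσ.le
        _ = a ^ σ * Real.exp (-(c * dist x y ^ 2)) := by
            rw [Real.mul_rpow ha0 (Real.exp_pos _).le, ← Real.exp_mul, hcdef]
            congr 2
            ring
    calc ∫⁻ y in D, (‖g y‖₊ : ℝ≥0∞) ^ σ
        ≤ ∫⁻ y in D, ENNReal.ofReal (a ^ σ) * ENNReal.ofReal (Real.exp (-(c * dist x y ^ 2))) :=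
          lintegral_mono_ae hpt
      _ = ENNReal.ofReal (a ^ σ) * ∫⁻ y in D, ENNReal.ofReal (Real.exp (-(c * dist x y ^ 2))) :=
          lintegral_const_mul' _ _ ENNReal.ofReal_ne_top
      _ ≤ _ := mul_le_mul_right (aux_gauss_lintegral_le D hc x) _
  have hW : (ENNReal.ofReal (a ^ σ) * ENNReal.ofReal ((Real.pi / c) ^ ((d : ℝ) / 2))) ^ (1/σ) =
      ENNReal.ofReal (C * (Real.pi * C' / σ) ^ ((d:ℝ)/(2*σ)) * t ^ (-(d:ℝ)/2 + (d:ℝ)/(2*σ))) := by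
    rw [← ENNReal.ofReal_mul (by positivity),
      ENNReal.ofReal_rpow_of_nonneg (by positivity) (by positivity)]
    congr 1
    have hπc : Real.pi / c = (Real.pi * C' / σ) * t := by
      rw [hcdef]; field_simp
    rw [hπc, Real.mul_rpow (by positivity) ht.le]
    have e1 : (a ^ σ) ^ (1/σ) = C * t ^ (-(d:ℝ)/2) := by
      rw [ha, ← Real.rpow_mul (by positivity), mul_one_div_cancel hσ.ne', Real.rpow_one]
    have e2 : (((Real.pi * C' / σ) ^ ((d:ℝ)/2) * t ^ ((d:ℝ)/2))) ^ (1/σ)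
        = (Real.pi * C' / σ) ^ ((d:ℝ)/(2*σ)) * t ^ ((d:ℝ)/(2*σ)) := by
      rw [← Real.mul_rpow (by positivity) (by positivity),
        ← Real.rpow_mul (by positivity)]
      have he : (d:ℝ)/2 * (1/σ) = (d:ℝ)/(2*σ) := by field_simp
      rw [he, Real.mul_rpow (by positivity) ht.le]
    rw [Real.mul_rpow (by positivity) (by positivity), e1, e2, Real.rpow_add ht]
    ring
  calc (∫⁻ y in D, (‖g y‖₊ : ℝ≥0∞) ^ σ) ^ (1/σ)
      ≤ (ENNReal.ofReal (a ^ σ) * ENNReal.ofReal ((Real.pi / c) ^ ((d : ℝ) / 2))) ^ (1/σ) :=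
        ENNReal.rpow_le_rpow key (by positivity)
    _ = _ := hW

/-- Gaussian kernels satisfy the mixed-norm finiteness conditions. -/
theorem gaussian_kernel_mixed_norm_finite
    {d : ℕ} (hd : 1 ≤ d) (D : Set (Esp d)) (hDmeas : MeasurableSet D)
    (hDbdd : Bornology.IsBounded D) (hDpos : 0 < volume D) (hDfin : volume D ≠ ⊤)
    (T : ℝ) (hT : T ∈ Ioc (0 : ℝ) 1)
    (G : ℝ → Esp d → Esp d → ℝ)
    (hGm : Measurable fun q : ℝ × Esp d × Esp d => G q.1 q.2.1 q.2.2)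
    (C C' : ℝ) (hC : 0 < C) (hC' : 0 < C')
    (hGauss : ∀ t ∈ Ioc (0 : ℝ) T, ∀ᵐ x ∂volume.restrict D, ∀ᵐ y ∂volume.restrict D,
      |G t x y| ≤ C * t ^ (-(d : ℝ) / 2) * Real.exp (-(dist x y) ^ 2 / (C' * t)))
    (r s r' s' : ℝ) (hr : 1 < r) (hs : 1 < s)
    (hr' : 1 / r + 1 / r' = 1) (hs' : 1 / s + 1 / s' = 1)
    (h1 : (d : ℝ) / s + 2 / r < 2) (h2 : (d : ℝ) / s < 2 / r) :
    kernelNorm₁ D T (ENNReal.ofReal r) (ENNReal.ofReal s)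
        (ENNReal.ofReal r') (ENNReal.ofReal s') G < ⊤ ∧
      kernelNorm₂ D T (ENNReal.ofReal r) (ENNReal.ofReal s) (ENNReal.ofReal s') G < ⊤ := by
  obtain ⟨hT0, hT1⟩ := hT
  have hr0 : (0:ℝ) < r := lt_trans one_pos hr
  have hs0 : (0:ℝ) < s := lt_trans one_pos hs
  have hs'0 : (0:ℝ) < s' := by
    have h1 : (0:ℝ) < 1/s' := by
      have : 1/s < 1 := by rw [div_lt_one hs0]; exact hs
      linarith
    exact one_div_pos.mp h1
  have hr'0 : (0:ℝ) < r' := by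
    have h1 : (0:ℝ) < 1/r' := by
      have : 1/r < 1 := by rw [div_lt_one hr0]; exact hr
      linarith
    exact one_div_pos.mp h1
  set β : ℝ := (d:ℝ)/(2*s) with hβ
  have hβ0 : 0 ≤ β := by positivity
  have hkey : ∀ a : ℝ, 0 < a → (d:ℝ)/s < 2/a → β * a < 1 := by
    intro a ha h
    have h2' : (d:ℝ) * a < 2 * s := (div_lt_div_iff₀ hs0 ha).mp h
    have e : β * a = (d:ℝ) * a / (2*s) := by rw [hβ]; ring
    rw [e]
    exact (div_lt_one (by positivity)).mpr h2'
  have hβr : β * r < 1 := hkey r hr0 h2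
  have h2r' : (2:ℝ)/r' = 2 - 2/r := by
    have e : 1/r' = 1 - 1/r := by linarith
    calc (2:ℝ)/r' = 2*(1/r') := by ring
      _ = 2 - 2/r := by rw [e]; ring
  have hβr' : β * r' < 1 := hkey r' hr'0 (by rw [h2r']; linarith)
  set A : ℝ := C * (Real.pi * C' / s') ^ ((d:ℝ)/(2*s')) with hA
  have hA0 : 0 < A := by
    rw [hA]
    have := Real.pi_pos
    positivity
  have hexp : -(d:ℝ)/2 + (d:ℝ)/(2*s') = -β := by
    have e : 1/s' = 1 - 1/s := by linarith
    have e2 : (d:ℝ)/(2*s') = (d:ℝ)/2 * (1/s') := by ring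
    rw [hβ, e2, e]; ring
  -- Step 1: a.e. bound for the inner y-norm
  have hstep : ∀ t₀ ∈ Ioc (0:ℝ) T, ∀ᵐ x ∂volume.restrict D,
      eLp (volume.restrict D) (ENNReal.ofReal s') (fun y => (‖G t₀ x y‖₊ : ℝ≥0∞))
        ≤ ENNReal.ofReal (A * t₀ ^ (-β)) := by
    intro t₀ ht₀
    filter_upwards [hGauss t₀ ht₀] with x hx
    rw [aux_eLp_ofReal _ hs'0]
    have h := aux_step1 (D := D) hC hC' ht₀.1 hs'0 x hx
    rw [hexp, ← hA] at h
    exact h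
  set MD : ℝ≥0∞ := (volume D) ^ (1/s) with hMD
  have hMDfin : MD ≠ ⊤ := by
    rw [hMD]; exact (ENNReal.rpow_lt_top_of_nonneg (by positivity) hDfin).ne
  -- the x-norm bound, for each time in (0,T]
  have hx2 : ∀ t₀ ∈ Ioc (0:ℝ) T,
      eLp (volume.restrict D) (ENNReal.ofReal s)
        (fun x => eLp (volume.restrict D) (ENNReal.ofReal s')
          fun y => (‖G t₀ x y‖₊ : ℝ≥0∞))
        ≤ ENNReal.ofReal (A * t₀ ^ (-β)) * MD := by
    intro t₀ ht₀
    refine le_trans (aux_eLp_mono_ae (hstep t₀ ht₀)) ?_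
    rw [aux_eLp_const _ hs0, Measure.restrict_apply_univ, hMD]
  -- finiteness of kernelNorm₂
  have hk2 : kernelNorm₂ D T (ENNReal.ofReal r) (ENNReal.ofReal s) (ENNReal.ofReal s') G < ⊤ := by
    rw [kernelNorm₂]
    have hb : (fun t => eLp (volume.restrict D) (ENNReal.ofReal s)
          fun x => eLp (volume.restrict D) (ENNReal.ofReal s')
            fun y => (‖G t x y‖₊ : ℝ≥0∞))
        ≤ᵐ[volume.restrict (Ioo (0:ℝ) T)]
          fun t => ENNReal.ofReal (A * t ^ (-β)) * MD := by
      filter_upwards [ae_restrict_mem measurableSet_Ioo] with t ht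
      exact hx2 t ⟨ht.1, ht.2.le⟩
    refine lt_of_le_of_lt (aux_eLp_mono_ae hb) ?_
    rw [aux_eLp_ofReal _ hr0]
    refine ENNReal.rpow_lt_top_of_nonneg (by positivity) ?_
    have hb2 : ∀ᵐ t ∂volume.restrict (Ioo (0:ℝ) T),
        (ENNReal.ofReal (A * t ^ (-β)) * MD) ^ r ≤
          (ENNReal.ofReal (A ^ r) * MD ^ r) * ENNReal.ofReal (t ^ (-(β * r))) := by
      filter_upwards [ae_restrict_mem measurableSet_Ioo] with t ht
      rw [ENNReal.mul_rpow_of_nonneg _ _ hr0.le,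
        ENNReal.ofReal_rpow_of_nonneg (mul_nonneg hA0.le (Real.rpow_nonneg ht.1.le _)) hr0.le,
        Real.mul_rpow hA0.le (Real.rpow_nonneg ht.1.le _), ← Real.rpow_mul ht.1.le, neg_mul,
        ENNReal.ofReal_mul (by positivity)]
      ring_nf
      exact le_rfl
    have hcne : ENNReal.ofReal (A ^ r) * MD ^ r ≠ ⊤ :=
      ENNReal.mul_ne_top ENNReal.ofReal_ne_top
        (ENNReal.rpow_lt_top_of_nonneg hr0.le hMDfin).ne
    refine ne_top_of_le_ne_top (b := (ENNReal.ofReal (A ^ r) * MD ^ r) *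
        ∫⁻ t in Ioo (0:ℝ) T, ENNReal.ofReal (t ^ (-(β * r)))) ?_ ?_
    · exact ENNReal.mul_ne_top hcne (aux_lint_rpow_lt_top hT0 (by linarith)).ne
    · refine le_trans (lintegral_mono_ae hb2) ?_
      exact le_of_eq (lintegral_const_mul' _ _ hcne)
  -- measurable version of the inner norm
  set Φ : ℝ × Esp d → ℝ≥0∞ := fun p =>
    eLp (volume.restrict D) (ENNReal.ofReal s') fun y => (‖G p.1 p.2 y‖₊ : ℝ≥0∞) with hΦdef
  have hΦm : Measurable Φ := by
    have h1 : Measurable (fun p : (ℝ × Esp d) × Esp d => (‖G p.1.1 p.1.2 p.2‖₊ : ℝ≥0∞) ^ s') := by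
      have hm0 : Measurable (fun p : (ℝ × Esp d) × Esp d => (p.1.1, p.1.2, p.2)) := by
        fun_prop
      have hcomp : Measurable (fun p : (ℝ × Esp d) × Esp d => G p.1.1 p.1.2 p.2) :=
        hGm.comp hm0
      exact hcomp.enorm.pow_const _
    have h2 : Measurable fun p : ℝ × Esp d => ∫⁻ y in D, (‖G p.1 p.2 y‖₊ : ℝ≥0∞) ^ s' :=
      h1.lintegral_prod_right'
    have he : Φ = fun p => (∫⁻ y in D, (‖G p.1 p.2 y‖₊ : ℝ≥0∞) ^ s') ^ (1/s') := by
      funext p; rw [hΦdef]; exact aux_eLp_ofReal _ hs'0 _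
    rw [he]; exact h2.pow_const _
  set gb : ℝ → ℝ≥0∞ := fun u => ENNReal.ofReal (A * u ^ (-β)) with hgb
  have hgbm : Measurable gb := by
    rw [hgb]
    exact ((measurable_id.pow_const (-β)).const_mul A).ennreal_ofReal
  have hset : MeasurableSet {z : ℝ × Esp d | Φ z ≤ gb z.1} :=
    measurableSet_le hΦm (hgbm.comp measurable_fst)
  have hprod : ∀ᵐ z ∂((volume.restrict (Ioc (0:ℝ) T)).prod (volume.restrict D)),
      Φ z ≤ gb z.1 := by
    refine (Measure.ae_prod_iff_ae_ae hset).mpr ?_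
    filter_upwards [ae_restrict_mem measurableSet_Ioc] with u hu
    exact hstep u hu
  have hswap : ∀ᵐ z ∂((volume.restrict D).prod (volume.restrict (Ioc (0:ℝ) T))),
      Φ (z.2, z.1) ≤ gb z.2 := by
    rw [← Measure.prod_swap]
    refine (ae_map_iff (p := fun z : Esp d × ℝ => Φ (z.2, z.1) ≤ gb z.2)
      measurable_swap.aemeasurable (hset.preimage measurable_swap)).mpr ?_
    simpa using hprod
  have hae : ∀ᵐ x ∂volume.restrict D, ∀ᵐ u ∂volume.restrict (Ioc (0:ℝ) T),
      Φ (u, x) ≤ gb u := Measure.ae_ae_of_ae_prod hswap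
  -- constants for the τ-layer
  set J : ℝ≥0∞ := ∫⁻ u in Ioo (0:ℝ) T, ENNReal.ofReal (u ^ (-(β * r'))) with hJ
  have hJfin : J ≠ ⊤ := by rw [hJ]; exact (aux_lint_rpow_lt_top hT0 (by linarith)).ne
  set K₁ : ℝ≥0∞ := (ENNReal.ofReal (A ^ r') * J) ^ (1/r') with hK₁
  have hK₁fin : K₁ ≠ ⊤ := by
    rw [hK₁]
    exact (ENNReal.rpow_lt_top_of_nonneg (by positivity)
      (ENNReal.mul_ne_top ENNReal.ofReal_ne_top hJfin)).ne
  have hinner : ∀ t ∈ Ioo (0:ℝ) T, ∀ᵐ x ∂volume.restrict D,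
      eLp (volume.restrict (Ioo (0:ℝ) t)) (ENNReal.ofReal r')
        (fun τ => eLp (volume.restrict D) (ENNReal.ofReal s')
          fun y => (‖G (t - τ) x y‖₊ : ℝ≥0∞)) ≤ K₁ := by
    intro t ht
    filter_upwards [hae] with x hx
    have hτ : ∀ᵐ τ ∂volume.restrict (Ioo (0:ℝ) t), Φ (t - τ, x) ≤ gb (t - τ) := by
      have hx' : volume ({u : ℝ | ¬ Φ (u, x) ≤ gb u} ∩ Ioc 0 T) = 0 := by
        rw [ae_iff] at hx
        rwa [Measure.restrict_apply' measurableSet_Ioc] at hx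
      have hpre : volume ((fun τ : ℝ => t - τ) ⁻¹'
          ({u : ℝ | ¬ Φ (u, x) ≤ gb u} ∩ Ioc 0 T)) = 0 :=
        (Measure.measurePreserving_sub_left volume t).quasiMeasurePreserving.preimage_null hx'
      rw [ae_iff, Measure.restrict_apply' measurableSet_Ioo]
      refine measure_mono_null ?_ hpre
      rintro τ ⟨hτ1, hτ2⟩
      exact ⟨hτ1, ⟨by simp only [sub_pos]; exact hτ2.2, by show t - τ ≤ T; linarith [ht.2, hτ2.1]⟩⟩
    refine le_trans (aux_eLp_mono_ae (f := fun τ => Φ (t - τ, x))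
      (g := fun τ => gb (t - τ)) hτ) ?_
    rw [aux_eLp_ofReal _ hr'0, hK₁]
    refine ENNReal.rpow_le_rpow ?_ (by positivity)
    have hpt : ∀ᵐ τ ∂volume.restrict (Ioo (0:ℝ) t),
        gb (t - τ) ^ r' ≤ ENNReal.ofReal (A ^ r') *
          ENNReal.ofReal ((t - τ) ^ (-(β * r'))) := by
      filter_upwards [ae_restrict_mem measurableSet_Ioo] with τ hτ'
      have htτ : (0:ℝ) < t - τ := by simp only [sub_pos]; exact hτ'.2
      rw [hgb]
      rw [ENNReal.ofReal_rpow_of_nonneg (by positivity) hr'0.le,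
        Real.mul_rpow hA0.le (by positivity), ← Real.rpow_mul htτ.le, neg_mul,
        ENNReal.ofReal_mul (by positivity)]
    have hmint : Measurable fun u : ℝ =>
        ENNReal.ofReal (A ^ r') * ENNReal.ofReal (u ^ (-(β * r'))) :=
      (((measurable_id.pow_const (-(β * r'))).ennreal_ofReal).const_mul _)
    have hpre2 : (fun τ : ℝ => t - τ) ⁻¹' (Ioo (0:ℝ) t) = Ioo (0:ℝ) t := by
      ext τ
      simp only [mem_preimage, mem_Ioo, sub_pos, sub_lt_self_iff]
      constructor
      · rintro ⟨h1, h2⟩; exact ⟨h2, h1⟩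
      · rintro ⟨h1, h2⟩; exact ⟨h2, h1⟩
    calc ∫⁻ τ in Ioo (0:ℝ) t, gb (t - τ) ^ r'
        ≤ ∫⁻ τ in Ioo (0:ℝ) t, ENNReal.ofReal (A ^ r') *
            ENNReal.ofReal ((t - τ) ^ (-(β * r'))) := lintegral_mono_ae hpt
      _ = ∫⁻ u in Ioo (0:ℝ) t, ENNReal.ofReal (A ^ r') *
            ENNReal.ofReal (u ^ (-(β * r'))) := by
          conv_lhs => rw [← hpre2]
          exact (Measure.measurePreserving_sub_left volume t).setLIntegral_comp_preimage
            measurableSet_Ioo hmint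
      _ ≤ ∫⁻ u in Ioo (0:ℝ) T, ENNReal.ofReal (A ^ r') *
            ENNReal.ofReal (u ^ (-(β * r'))) :=
          lintegral_mono_set (Ioo_subset_Ioo le_rfl ht.2.le)
      _ = ENNReal.ofReal (A ^ r') * J := by
          rw [hJ]; exact lintegral_const_mul' _ _ ENNReal.ofReal_ne_top
  -- finiteness of kernelNorm₁
  have hk1 : kernelNorm₁ D T (ENNReal.ofReal r) (ENNReal.ofReal s)
      (ENNReal.ofReal r') (ENNReal.ofReal s') G < ⊤ := by
    rw [kernelNorm₁]
    have hb : (fun t => eLp (volume.restrict D) (ENNReal.ofReal s)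
          fun x => eLp (volume.restrict (Ioo (0:ℝ) t)) (ENNReal.ofReal r')
            fun τ => eLp (volume.restrict D) (ENNReal.ofReal s')
              fun y => (‖G (t - τ) x y‖₊ : ℝ≥0∞))
        ≤ᵐ[volume.restrict (Ioo (0:ℝ) T)] fun _ => K₁ * MD := by
      filter_upwards [ae_restrict_mem measurableSet_Ioo] with t ht
      refine le_trans (aux_eLp_mono_ae (hinner t ht)) ?_
      rw [aux_eLp_const _ hs0, Measure.restrict_apply_univ, hMD]
    refine lt_of_le_of_lt (aux_eLp_mono_ae hb) ?_
    rw [aux_eLp_const _ hr0, Measure.restrict_apply_univ]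
    refine ENNReal.mul_lt_top ?_ ?_
    · exact (ENNReal.mul_ne_top hK₁fin hMDfin).lt_top
    · refine (ENNReal.rpow_lt_top_of_nonneg (by positivity) ?_)
      rw [Real.volume_Ioo]
      exact ENNReal.ofReal_ne_top
  exact ⟨hk1, hk2⟩
end
end
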